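/- arXiv:2205.02025 — 11 statements merged into one kernel-verified Lean document; each statement's English description precedes it below -/
import Mathlib

section
/- Let k ≥ 2 be an integer and let λ : ℤ\{0} → ℝ with λ_i > 0 for all i. If the series Σ_{j≠0} λ_j converges, then there exists a unique function z : ℤ\{0} → ℝ such that z_i > 0 for all i, z is summable, and z_i = λ_i / (1 + Σ_{j≠0} z_j)^k holds for every i ≠ 0. -/
private lemma g_strictMonoOn (k : ℕ) :
    StrictMonoOn (fun A : ℝ => A * (1 + A) ^ k) (Set.Ici 0) := by
  intro a ha b hb hab
  simp only [Set.mem_Ici] at ha hb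
  have h1 : (1 + a) ^ k ≤ (1 + b) ^ k :=
    pow_le_pow_left₀ (by linarith) (by linarith) k
  have h2 : (0:ℝ) < (1 + b) ^ k := pow_pos (by linarith) k
  calc a * (1 + a) ^ k ≤ a * (1 + b) ^ k := mul_le_mul_of_nonneg_left h1 ha
    _ < b * (1 + b) ^ k := by nlinarith

/-- Proposition 1: existence and uniqueness of a positive summable solution of
`z_i = λ_i / (1 + Σ_{j≠0} z_j)^k`. -/
theorem stmt_2 (k : ℕ) (hk : 2 ≤ k)
    (lam : {i : ℤ // i ≠ 0} → ℝ)
    (hlam : ∀ i, 0 < lam i) (hsum : Summable lam) :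
    ∃! z : {i : ℤ // i ≠ 0} → ℝ,
      (∀ i, 0 < z i) ∧ Summable z ∧
      ∀ i, z i = lam i / (1 + ∑' j, z j) ^ k := by
  set L : ℝ := ∑' j, lam j with hL
  have hLpos : 0 < L := by
    have := Summable.tsum_pos hsum (fun i => (hlam i).le) ⟨1, one_ne_zero⟩ (hlam _)
    simpa [hL] using this
  set g : ℝ → ℝ := fun A => A * (1 + A) ^ k with hg
  have hgcont : ContinuousOn g (Set.Icc 0 L) := by fun_prop
  have hgL : L ≤ g L := by
    have : (1:ℝ) ≤ (1 + L) ^ k := one_le_pow₀ (by linarith)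
    have := mul_le_mul_of_nonneg_left this hLpos.le
    simpa [hg] using this
  have hmem : L ∈ Set.Icc (g 0) (g L) := ⟨by simp [hg]; linarith, hgL⟩
  obtain ⟨A₀, hA₀mem, hA₀⟩ := intermediate_value_Icc hLpos.le hgcont hmem
  have hA₀' : A₀ * (1 + A₀) ^ k = L := by simpa [hg] using hA₀
  have hA₀nn : 0 ≤ A₀ := hA₀mem.1
  have hA₀pos : 0 < A₀ := by
    rcases lt_or_eq_of_le hA₀nn with h | h
    · exact h
    · exfalso; rw [← h] at hA₀'; simp at hA₀'; linarith
  have h1A : (0:ℝ) < (1 + A₀) ^ k := pow_pos (by linarith) k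
  -- the candidate solution
  set z₀ : {i : ℤ // i ≠ 0} → ℝ := fun i => lam i / (1 + A₀) ^ k with hz₀
  have hz₀sum : Summable z₀ := by
    simpa [hz₀, div_eq_mul_inv] using hsum.mul_right ((1 + A₀) ^ k)⁻¹
  have htsumz₀ : ∑' j, z₀ j = A₀ := by
    have : ∑' j, z₀ j = L / (1 + A₀) ^ k := by
      simp [hz₀, tsum_div_const, hL]
    rw [this, ← hA₀']
    field_simp
  refine ⟨z₀, ⟨fun i => div_pos (hlam i) h1A, hz₀sum, fun i => by rw [htsumz₀]⟩, ?_⟩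
  rintro z ⟨hzpos, hzsum, hzeq⟩
  set A : ℝ := ∑' j, z j with hA
  have hApos : 0 < A := Summable.tsum_pos hzsum (fun i => (hzpos i).le) ⟨1, one_ne_zero⟩ (hzpos _)
  have h1A' : (0:ℝ) < (1 + A) ^ k := pow_pos (by linarith) k
  have htsum : A = L / (1 + A) ^ k := by
    rw [hA]
    calc ∑' j, z j = ∑' j, lam j / (1 + A) ^ k := by
          exact tsum_congr fun i => by rw [hzeq i]
      _ = L / (1 + A) ^ k := by rw [tsum_div_const]
  have hgA : A * (1 + A) ^ k = L := by
    field_simp at htsum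
    linarith [htsum]
  have hAeq : A = A₀ :=
    g_strictMonoOn k |>.injOn (Set.mem_Ici.mpr hApos.le) (Set.mem_Ici.mpr hA₀nn)
      (by show A*(1+A)^k = A₀*(1+A₀)^k; rw [hgA, hA₀'])
  funext i
  rw [hzeq i, hAeq]
end

section
/- Let k ≥ 2 be an integer and let y > 0 be a real number with y ≠ 1/(k−1). Then there exists exactly one real number x > 0 with x ≠ y such that y(1+x)^k = x(1+y)^k. -/
open Set

noncomputable def hcF (k : ℕ) (x : ℝ) : ℝ := (1 + x) ^ k / x

lemma hcF_hasDerivAt (k : ℕ) (hk : 2 ≤ k) {x : ℝ} (hx : 0 < x) :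
    HasDerivAt (hcF k) ((1 + x) ^ (k - 1) * (((k : ℝ) - 1) * x - 1) / x ^ 2) x := by
  have h1 : HasDerivAt (fun x : ℝ => (1 + x) ^ k) ((k : ℝ) * (1 + x) ^ (k - 1)) x := by
    have := (hasDerivAt_pow k (1 + x)).comp x ((hasDerivAt_const x (1:ℝ)).add (hasDerivAt_id x))
    simpa [Function.comp_def] using this
  have := h1.div (hasDerivAt_id x) hx.ne'
  refine this.congr_deriv ?_
  have hpow : (1 + x) ^ k = (1 + x) ^ (k - 1) * (1 + x) := by
    rw [← pow_succ]; congr 1; omega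
  have hkk : ((k - 1 : ℕ) : ℝ) = (k : ℝ) - 1 := by
    push_cast [Nat.cast_sub (by omega : 1 ≤ k)]; ring
  rw [hpow, id_eq]
  field_simp
  ring

lemma hcF_cont (k : ℕ) {s : Set ℝ} (hs : ∀ x ∈ s, x ≠ 0) : ContinuousOn (hcF k) s :=
  ContinuousOn.div (by fun_prop) continuousOn_id hs

lemma hcF_anti (k : ℕ) (hk : 2 ≤ k) :
    StrictAntiOn (hcF k) (Ioc 0 (1 / ((k : ℝ) - 1))) := by
  have hk1 : (1 : ℝ) ≤ (k : ℝ) - 1 := by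
    have : (2 : ℝ) ≤ (k : ℝ) := by exact_mod_cast hk
    linarith
  apply strictAntiOn_of_deriv_neg (convex_Ioc _ _)
    (hcF_cont k (fun x hx => ne_of_gt hx.1))
  intro x hx
  rw [interior_Ioc] at hx
  have hx0 : 0 < x := hx.1
  rw [(hcF_hasDerivAt k hk hx0).deriv]
  apply div_neg_of_neg_of_pos
  · apply mul_neg_of_pos_of_neg
    · positivity
    · have := hx.2
      rw [lt_div_iff₀ (by linarith)] at this
      linarith [this]
  · positivity

lemma hcF_mono (k : ℕ) (hk : 2 ≤ k) :
    StrictMonoOn (hcF k) (Ici (1 / ((k : ℝ) - 1))) := by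
  have hk1 : (1 : ℝ) ≤ (k : ℝ) - 1 := by
    have : (2 : ℝ) ≤ (k : ℝ) := by exact_mod_cast hk
    linarith
  have hc : (0 : ℝ) < 1 / ((k : ℝ) - 1) := by positivity
  apply strictMonoOn_of_deriv_pos (convex_Ici _)
    (hcF_cont k (fun x hx => by simp only [mem_Ici] at hx; nlinarith))
  intro x hx
  rw [interior_Ici] at hx
  have hx0 : 0 < x := lt_trans hc hx
  rw [(hcF_hasDerivAt k hk hx0).deriv]
  apply div_pos
  · apply mul_pos
    · positivity
    · have h2 : 1 / ((k:ℝ) - 1) < x := hx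
      rw [div_lt_iff₀ (by linarith)] at h2
      linarith
  · positivity

lemma hcF_ge_self (k : ℕ) (hk : 2 ≤ k) {x : ℝ} (hx : 1 ≤ x) : x ≤ hcF k x := by
  have hx0 : 0 < x := by linarith
  rw [hcF, le_div_iff₀ hx0]
  calc x * x = x ^ 2 := by ring
    _ ≤ x ^ k := pow_le_pow_right₀ hx hk
    _ ≤ (1 + x) ^ k := pow_le_pow_left₀ (by linarith) (by linarith) k

lemma hcF_pos (k : ℕ) {x : ℝ} (hx : 0 < x) : 0 < hcF k x := by
  rw [hcF]; positivity

lemma hcF_eq_iff (k : ℕ) {x y : ℝ} (hx : 0 < x) (hy : 0 < y) :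
    hcF k x = hcF k y ↔ y * (1 + x) ^ k = x * (1 + y) ^ k := by
  rw [hcF, hcF, div_eq_div_iff hx.ne' hy.ne']
  constructor <;> intro h <;> linarith

/-- For `k ≥ 2` and `y > 0` with `y ≠ 1/(k-1)`, the equation
`y(1+x)^k = x(1+y)^k` has exactly one positive root `x` different from `y`. -/
theorem stmt_6 (k : ℕ) (hk : 2 ≤ k) (y : ℝ) (hy : 0 < y)
    (hy' : y ≠ 1 / ((k : ℝ) - 1)) :
    ∃! x : ℝ, 0 < x ∧ x ≠ y ∧ y * (1 + x) ^ k = x * (1 + y) ^ k := by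
  set c : ℝ := 1 / ((k : ℝ) - 1) with hc_def
  have hk1 : (1 : ℝ) ≤ (k : ℝ) - 1 := by
    have : (2 : ℝ) ≤ (k : ℝ) := by exact_mod_cast hk
    linarith
  have hc : 0 < c := by positivity
  rcases lt_or_gt_of_ne hy' with hlt | hgt
  · -- y < c, find root in (c, ∞)
    have hyc : y ∈ Ioc 0 c := ⟨hy, hlt.le⟩
    have hfcy : hcF k c < hcF k y := hcF_anti k hk hyc ⟨hc, le_refl c⟩ hlt
    set M : ℝ := max (c + 1) (hcF k y) with hM_def
    have hM1 : 1 ≤ M := le_trans (by linarith) (le_max_left _ _)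
    have hMy : hcF k y ≤ M := le_max_right _ _
    have hcM : c ≤ M := le_trans (by linarith) (le_max_left _ _)
    have hfM : hcF k y ≤ hcF k M := le_trans hMy (hcF_ge_self k hk hM1)
    have hsub := intermediate_value_Icc hcM
      (hcF_cont k (fun z hz => by
        have : 0 < z := lt_of_lt_of_le hc hz.1; exact this.ne'))
    obtain ⟨x, hxmem, hxeq⟩ := hsub ⟨hfcy.le, hfM⟩
    have hxc : c < x := by
      rcases lt_or_eq_of_le hxmem.1 with h | h
      · exact h
      · exfalso; rw [← h] at hxeq; linarith
    have hx0 : 0 < x := lt_trans hc hxc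
    have hxy : x ≠ y := by intro h; rw [h] at hxc; linarith
    refine ⟨x, ⟨hx0, hxy, (hcF_eq_iff k hx0 hy).mp hxeq⟩, ?_⟩
    rintro z ⟨hz0, hzy, hzeq⟩
    have hfz : hcF k z = hcF k y := (hcF_eq_iff k hz0 hy).mpr hzeq
    have hzc : c < z := by
      by_contra h
      push_neg at h
      exact hzy ((hcF_anti k hk).injOn ⟨hz0, h⟩ hyc hfz)
    exact (hcF_mono k hk).injOn hzc.le (le_trans hxmem.1 (le_refl x))
      (by rw [hfz, hxeq])
  · -- y > c, find root in (0, c)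
    have hyc : y ∈ Ici c := le_of_lt hgt
    have hfcy : hcF k c < hcF k y := hcF_mono k hk (le_refl c) hyc hgt
    have hfy0 : 0 < hcF k y := hcF_pos k hy
    set a : ℝ := min c (1 / hcF k y) with ha_def
    have ha0 : 0 < a := lt_min hc (by positivity)
    have hac : a ≤ c := min_le_left _ _
    have hfa : hcF k y ≤ hcF k a := by
      have h1 : a ≤ 1 / hcF k y := min_le_right _ _
      have h2 : hcF k y ≤ 1 / a := by
        rw [le_div_iff₀ ha0]
        calc hcF k y * a ≤ hcF k y * (1 / hcF k y) := by
              apply mul_le_mul_of_nonneg_left h1 hfy0.le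
          _ = 1 := by field_simp
      calc hcF k y ≤ 1 / a := h2
        _ ≤ (1 + a) ^ k / a := by
            gcongr
            exact one_le_pow₀ (by linarith)
        _ = hcF k a := rfl
    have hsub := intermediate_value_Icc' hac
      (hcF_cont k (fun z hz => (lt_of_lt_of_le ha0 hz.1).ne'))
    obtain ⟨x, hxmem, hxeq⟩ := hsub ⟨hfcy.le, hfa⟩
    have hxc : x < c := by
      rcases lt_or_eq_of_le hxmem.2 with h | h
      · exact h
      · exfalso; rw [h] at hxeq; linarith
    have hx0 : 0 < x := lt_of_lt_of_le ha0 hxmem.1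
    have hxy : x ≠ y := by intro h; rw [h] at hxc; linarith
    refine ⟨x, ⟨hx0, hxy, (hcF_eq_iff k hx0 hy).mp hxeq⟩, ?_⟩
    rintro z ⟨hz0, hzy, hzeq⟩
    have hfz : hcF k z = hcF k y := (hcF_eq_iff k hz0 hy).mpr hzeq
    have hzc : z < c := by
      by_contra h
      push_neg at h
      exact hzy ((hcF_mono k hk).injOn h hyc hfz)
    exact (hcF_anti k hk).injOn ⟨hz0, hzc.le⟩ ⟨hx0, hxc.le⟩ (by rw [hfz, hxeq])
end

section
/- Let k ≥ 2 be an integer and set y = 1/(k−1). Then for every real x > 0, the equality y(1+x)^k = x(1+y)^k implies x = y; that is, x = y is the only positive root of y(1+x)^k − x(1+y)^k = 0. -/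
/-- Degenerate case: for `y = 1/(k-1)`, `x = y` is the only positive root of
`y(1+x)^k = x(1+y)^k`. -/
theorem stmt_7 (k : ℕ) (hk : 2 ≤ k) (y : ℝ) (hy : y = 1 / ((k : ℝ) - 1)) :
    ∀ x : ℝ, 0 < x → y * (1 + x) ^ k = x * (1 + y) ^ k → x = y := by
  intro x hx heq
  have hk1 : (2 : ℝ) ≤ (k : ℝ) := by exact_mod_cast hk
  have hkm : (0 : ℝ) < (k : ℝ) - 1 := by linarith
  have hy0 : 0 < y := by rw [hy]; positivity
  have h1y : 0 < 1 + y := by linarith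
  have h1x : 0 < 1 + x := by linarith
  set t : ℝ := (1 + x) / (1 + y) with ht
  have ht0 : 0 < t := div_pos h1x h1y
  -- key identity : t ^ k = 1 + k * (t - 1)
  have hys : y * ((k:ℝ) - 1) = 1 := by
    rw [hy]; field_simp
  have hxy : x / y = ((k:ℝ) - 1) * x := by
    rw [hy]; field_simp
  have htk : t ^ k = 1 + (k : ℝ) * (t - 1) := by
    have h1 : t ^ k = x / y := by
      rw [ht, div_pow]
      rw [div_eq_div_iff (by positivity) (ne_of_gt hy0)]
      linarith [heq]
    have h2 : t = (1 + x) * ((k:ℝ) - 1) / (k:ℝ) := by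
      rw [ht, hy]
      field_simp
      ring
    rw [h1, hxy, h2]
    field_simp
    ring
  by_contra hne
  have htne : t - 1 ≠ 0 := by
    intro h
    apply hne
    have : 1 + x = 1 + y := by
      have : t = 1 := by linarith
      rw [ht, div_eq_one_iff_eq (ne_of_gt h1y)] at this
      linarith [this]
    linarith
  have hb := one_add_mul_self_lt_rpow_one_add (s := t - 1) (by linarith) htne
    (p := (k : ℝ)) (by linarith)
  rw [show (1 : ℝ) + (t - 1) = t by ring, Real.rpow_natCast] at hb
  linarith [htk, hb]
end

section
/- Let k ≥ 2 be an integer and y > 0 a real number. Then the set of positive real numbers x satisfying y(1+x)^k = x(1+y)^k has at most two elements. -/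
open Set

/-- Descartes-type claim: for `k ≥ 2` and `y > 0`, the set of positive roots of
`y(1+x)^k = x(1+y)^k` has at most two elements. -/
theorem stmt_8 (k : ℕ) (hk : 2 ≤ k) (y : ℝ) (hy : 0 < y) :
    ∃ a b : ℝ,
      {x : ℝ | 0 < x ∧ y * (1 + x) ^ k = x * (1 + y) ^ k} ⊆ {a, b} := by
  set S := {x : ℝ | 0 < x ∧ y * (1 + x) ^ k = x * (1 + y) ^ k} with hSdef
  have key : ∀ a b c, a ∈ S → b ∈ S → c ∈ S → a < b → b < c → False := by
    intro a b c ha hb hc hab hbc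
    obtain ⟨ha0, hae⟩ := ha
    obtain ⟨hb0, hbe⟩ := hb
    obtain ⟨hc0, hce⟩ := hc
    have hca : (0:ℝ) < c - a := by linarith
    set lam := (c - b) / (c - a) with hlamdef
    set mu := (b - a) / (c - a) with hmudef
    have hlam : 0 < lam := div_pos (by linarith) hca
    have hmu : 0 < mu := div_pos (by linarith) hca
    have hsum : lam + mu = 1 := by
      rw [hlamdef, hmudef, ← add_div, div_eq_one_iff_eq hca.ne']; ring
    have hb' : lam * (1 + a) + mu * (1 + c) = 1 + b := by
      rw [hlamdef, hmudef, div_mul_eq_mul_div, div_mul_eq_mul_div, ← add_div, div_eq_iff hca.ne']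
      ring
    have hbb : lam * a + mu * c = b := by
      rw [hlamdef, hmudef, div_mul_eq_mul_div, div_mul_eq_mul_div, ← add_div, div_eq_iff hca.ne']
      ring
    have hne : (1 + a : ℝ) ≠ 1 + c := by intro h; linarith
    have hconv := (strictConvexOn_pow hk).2 (show (1:ℝ) + a ∈ Ici (0:ℝ) by
        simp; linarith) (show (1:ℝ) + c ∈ Ici (0:ℝ) by simp; linarith)
        hne hlam hmu hsum
    simp only [smul_eq_mul] at hconv
    rw [hb'] at hconv
    -- hconv : (1+b)^k < lam*(1+a)^k + mu*(1+c)^k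
    have h1 : y * (1 + b) ^ k < lam * (y * (1 + a) ^ k) + mu * (y * (1 + c) ^ k) := by
      nlinarith [hconv, hy]
    rw [hae, hce, hbe] at h1
    have h2 : lam * (a * (1 + y) ^ k) + mu * (c * (1 + y) ^ k) = b * (1 + y) ^ k := by
      rw [← hbb]; ring
    linarith
  by_cases h : ∃ a b, a ∈ S ∧ b ∈ S ∧ a ≠ b
  · obtain ⟨a, b, ha, hb, hab⟩ := h
    refine ⟨a, b, fun x hx => ?_⟩
    by_contra hx'
    simp only [mem_insert_iff, mem_singleton_iff, not_or] at hx'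
    obtain ⟨hxa, hxb⟩ := hx'
    rcases hab.lt_or_gt with h1 | h1
    · rcases lt_trichotomy x a with h2 | h2 | h2
      · exact key x a b hx ha hb h2 h1
      · exact hxa h2
      · rcases lt_trichotomy x b with h3 | h3 | h3
        · exact key a x b ha hx hb h2 h3
        · exact hxb h3
        · exact key a b x ha hb hx h1 h3
    · rcases lt_trichotomy x b with h2 | h2 | h2
      · exact key x b a hx hb ha h2 h1
      · exact hxb h2
      · rcases lt_trichotomy x a with h3 | h3 | h3
        · exact key b x a hb hx ha h2 h3
        · exact hxa h3
        · exact key b a x hb ha hx h1 h3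
  · push_neg at h
    by_cases hne : S.Nonempty
    · obtain ⟨a, ha⟩ := hne
      exact ⟨a, a, fun x hx => by simp [h x a hx ha]⟩
    · exact ⟨0, 0, fun x hx => absurd ⟨x, hx⟩ hne⟩
end

section
/- Let k ≥ 2 be an integer and Λ > 0, and set Λ_cr = k^k/(k−1)^{k+1}. Consider the system of equations A(1+B)^k = Λ and B(1+A)^k = Λ in positive reals A, B. If Λ ≤ Λ_cr, then the system has exactly one solution, and it satisfies A = B. If Λ > Λ_cr, then the system has exactly three solutions: one with A = B, and two further solutions (A*, B*) and (B*, A*) with A* ≠ B*. -/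
open Finset

noncomputable def stmt10Pa (k : ℕ) (r : ℝ) : ℝ := ∑ i ∈ Finset.range k, r ^ i

noncomputable def stmt10G (k : ℕ) (r : ℝ) : ℝ :=
  stmt10Pa k r ^ k / (r * stmt10Pa (k-1) r ^ (k+1))

lemma stmt10Pa_pos (k : ℕ) (hk : 1 ≤ k) {r : ℝ} (hr : 0 ≤ r) : 0 < stmt10Pa k r := by
  apply Finset.sum_pos' (fun i _ => pow_nonneg hr i)
  exact ⟨0, Finset.mem_range.2 (by omega), by norm_num⟩

lemma stmt10Pa_one (k : ℕ) : stmt10Pa k 1 = k := by simp [stmt10Pa]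

lemma stmt10geom (k : ℕ) (r : ℝ) : (r - 1) * stmt10Pa k r = r ^ k - 1 := by
  rw [stmt10Pa, mul_comm]; exact geom_sum_mul r k

lemma stmt10Pa_cont (k : ℕ) : Continuous (stmt10Pa k) := by
  unfold stmt10Pa; exact continuous_finset_sum _ (fun i _ => continuous_pow i)

lemma stmt10amgm (k : ℕ) (hk : 2 ≤ k) {r : ℝ} (hr : 1 < r) :
    (k : ℝ) ^ 2 * r ^ (k - 1) < stmt10Pa k r ^ 2 := by
  have hr0 : (0:ℝ) < r := lt_trans one_pos hr
  set T := Finset.range k ×ˢ Finset.range k with hT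
  have hsq : stmt10Pa k r ^ 2 = ∑ p ∈ T, r ^ (p.1 + p.2) := by
    rw [sq, stmt10Pa, Finset.sum_mul_sum, hT, Finset.sum_product]
    simp [pow_add]
  have hrefl : ∑ p ∈ T, r ^ ((k - 1 - p.1) + (k - 1 - p.2)) = ∑ p ∈ T, r ^ (p.1 + p.2) := by
    rw [hT, Finset.sum_product, Finset.sum_product]
    rw [← Finset.sum_range_reflect (fun i => ∑ j ∈ Finset.range k, r ^ (i + j)) k]
    apply Finset.sum_congr rfl
    intro i _
    exact Finset.sum_range_reflect (fun j => r ^ ((k - 1 - i) + j)) k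
  have key : ∀ p ∈ T, 2 * r ^ (k - 1) ≤ r ^ (p.1 + p.2) + r ^ ((k - 1 - p.1) + (k - 1 - p.2)) := by
    rintro ⟨i, j⟩ hp
    simp only [hT, Finset.mem_product, Finset.mem_range] at hp
    set a := r ^ (i + j) with ha
    set b := r ^ ((k - 1 - i) + (k - 1 - j)) with hb
    have ha0 : 0 < a := pow_pos hr0 _
    have hc2 : (r ^ (k - 1)) ^ 2 = a * b := by
      rw [ha, hb, ← pow_mul, ← pow_add]
      congr 1
      omega
    nlinarith [sq_nonneg (a - r ^ (k - 1))]
  have hstrict : 2 * r ^ (k - 1) < r ^ ((0:ℕ) + (0:ℕ)) + r ^ ((k - 1 - 0) + (k - 1 - 0)) := by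
    have h1 : (1:ℝ) < r ^ (k - 1) := one_lt_pow₀ hr (by omega)
    have h2 : r ^ ((k - 1 - 0) + (k - 1 - 0)) = (r ^ (k-1)) ^ 2 := by
      rw [← pow_mul]; congr 1; omega
    rw [h2]
    simp only [Nat.add_zero, pow_zero]
    nlinarith [sq_nonneg (r ^ (k-1) - 1)]
  have hmem : ((0:ℕ), (0:ℕ)) ∈ T := by
    simp [hT, Finset.mem_product, Finset.mem_range]; omega
  have hlt : ∑ _p ∈ T, 2 * r ^ (k - 1) < ∑ p ∈ T, (r ^ (p.1 + p.2) + r ^ ((k - 1 - p.1) + (k - 1 - p.2))) :=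
    Finset.sum_lt_sum key ⟨(0,0), hmem, hstrict⟩
  rw [Finset.sum_const, Finset.sum_add_distrib, hrefl, ← hsq] at hlt
  have hcard : (T.card : ℝ) = (k:ℝ)^2 := by
    rw [hT, Finset.card_product, Finset.card_range]; push_cast; ring
  rw [nsmul_eq_mul, hcard] at hlt
  linarith

lemma stmt10G_one (k : ℕ) (hk : 2 ≤ k) :
    stmt10G k 1 = (k : ℝ) ^ k / ((k : ℝ) - 1) ^ (k + 1) := by
  have h1 : stmt10Pa k 1 = (k:ℝ) := by simp [stmt10Pa]
  have h2 : stmt10Pa (k-1) 1 = ((k-1 : ℕ) : ℝ) := by simp [stmt10Pa]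
  rw [stmt10G, h1, h2, Nat.cast_sub (by omega), Nat.cast_one, one_mul]

lemma stmt10G_contOn (k : ℕ) (hk : 2 ≤ k) : ContinuousOn (stmt10G k) (Set.Ici 1) := by
  apply ContinuousOn.div ((stmt10Pa_cont k).pow k).continuousOn
    (continuous_id.mul ((stmt10Pa_cont (k-1)).pow (k+1))).continuousOn
  intro x hx
  have hx1 : (1:ℝ) ≤ x := hx
  have : 0 < x * stmt10Pa (k-1) x ^ (k+1) := by
    have := stmt10Pa_pos (k-1) (by omega) (by linarith : (0:ℝ) ≤ x)
    positivity
  exact ne_of_gt this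

-- the key value computation
lemma stmt10val (k : ℕ) (hk : 2 ≤ k) {r : ℝ} (hr : 1 < r) :
    (r ^ k * (r - 1) / (r ^ k - r)) * (1 + (r - 1) / (r ^ k - r)) ^ k = stmt10G k r := by
  have hr0 : (0:ℝ) < r := lt_trans one_pos hr
  have hr1 : (0:ℝ) < r - 1 := by linarith
  have hq : (0:ℝ) < r ^ (k-1) - 1 := sub_pos.mpr (one_lt_pow₀ hr (by omega))
  have hQ : 0 < stmt10Pa (k-1) r := stmt10Pa_pos (k-1) (by omega) hr0.le
  have hkr : r ^ k - r = r * ((r - 1) * stmt10Pa (k-1) r) := by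
    rw [stmt10geom]
    have : r ^ k = r * r ^ (k-1) := by
      rw [← pow_succ']; congr 1; omega
    rw [this]; ring
  have hkrpos : (0:ℝ) < r ^ k - r := by rw [hkr]; positivity
  have h1A : 1 + (r - 1) / (r ^ k - r) = ((r-1) * stmt10Pa k r) / (r ^ k - r) := by
    rw [stmt10geom]
    field_simp
    ring
  rw [h1A, stmt10G, div_pow, hkr, div_mul_div_comm]
  rw [div_eq_div_iff (by positivity) (by positivity)]
  generalize r - 1 = a
  ring

lemma stmt10deriv (m : ℕ) {r : ℝ} (hr : 1 < r) :
    ∃ v, 0 < v ∧ HasDerivAt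
      (fun x : ℝ => ((x-1)*(x^(m+2)-1)^(m+2)) / (x*(x^(m+1)-1)^(m+3))) v r := by
  have hr0 : (0:ℝ) < r := lt_trans one_pos hr
  have hp : (0:ℝ) < r^(m+2) - 1 := sub_pos.mpr (one_lt_pow₀ hr (by omega))
  have hq : (0:ℝ) < r^(m+1) - 1 := sub_pos.mpr (one_lt_pow₀ hr (by omega))
  have hD : (0:ℝ) < r*(r^(m+1)-1)^(m+3) := by positivity
  have hN := ((hasDerivAt_id r).sub_const 1).mul
    (((hasDerivAt_pow (m+2) r).sub_const 1).pow (m+2))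
  have hDd := (hasDerivAt_id r).mul (((hasDerivAt_pow (m+1) r).sub_const 1).pow (m+3))
  have hdiv := hN.div hDd hD.ne'
  refine ⟨_, ?_, hdiv⟩
  apply div_pos
  · -- numerator positive
    simp only [id_eq, Pi.mul_apply, Pi.pow_apply, show m+2-1 = m+1 from rfl, show m+1-1 = m from rfl,
      show m+3-1 = m+2 from rfl, one_mul]
    have ep : (r^(m+2)-1)^(m+2) = (r^(m+2)-1)^(m+1)*(r^(m+2)-1) := pow_succ _ (m+1)
    have eq' : (r^(m+1)-1)^(m+3) = (r^(m+1)-1)^(m+2)*(r^(m+1)-1) := pow_succ _ (m+2)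
    have hPa : (r - 1) * stmt10Pa (m+2) r = r^(m+2) - 1 := stmt10geom (m+2) r
    have hE : (0:ℝ) < (r^(m+2)-1)^2 - ((m:ℝ)+2)^2*(r-1)^2*r^(m+1) := by
      have h1 := stmt10amgm (m+2) (by omega) hr
      have h2 : ((m+2:ℕ):ℝ) = (m:ℝ)+2 := by push_cast; ring
      have h3 : (m+2)-1 = m+1 := rfl
      rw [h3, h2] at h1
      have h4 : (r^(m+2)-1)^2 = (r-1)^2 * stmt10Pa (m+2) r ^ 2 := by
        rw [← hPa]; ring
      rw [h4]
      have hr1 : (0:ℝ) < (r-1)^2 := pow_pos (by linarith) 2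
      calc (0:ℝ) < (r-1)^2 * (stmt10Pa (m+2) r ^ 2 - ((m:ℝ)+2)^2 * r^(m+1)) := by
            apply mul_pos hr1; linarith
        _ = (r-1)^2 * stmt10Pa (m+2) r ^ 2 - ((m:ℝ)+2)^2*(r-1)^2*r^(m+1) := by ring
    have hfac : ((r ^ (m + 2) - 1) ^ (m + 2) +
          (r - 1) * (↑(m + 2) * (r ^ (m + 2) - 1) ^ (m + 1) * (↑(m + 2) * r ^ (m + 1)))) *
            (r * (r ^ (m + 1) - 1) ^ (m + 3)) -
          (r - 1) * (r ^ (m + 2) - 1) ^ (m + 2) *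
            ((r ^ (m + 1) - 1) ^ (m + 3) +
              r * (↑(m + 3) * (r ^ (m + 1) - 1) ^ (m + 2) * (↑(m + 1) * r ^ m))) =
        (r^(m+2)-1)^(m+1) * (r^(m+1)-1)^(m+2) *
          ((r^(m+2)-1)^2 - ((m:ℝ)+2)^2*(r-1)^2*r^(m+1)) := by
      rw [ep, eq']
      push_cast
      generalize (r^(m+2)-1)^(m+1) = P1
      generalize (r^(m+1)-1)^(m+2) = Q2
      ring
    rw [hfac]  -- hope the goal matches
    positivity
  · positivity

lemma stmt10G_eq_ND (k : ℕ) (hk : 2 ≤ k) {r : ℝ} (hr : 1 < r) :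
    stmt10G k r = ((r-1)*(r^k-1)^k) / (r*(r^(k-1)-1)^(k+1)) := by
  have hr0 : (0:ℝ) < r := lt_trans one_pos hr
  have hr1 : (0:ℝ) < r - 1 := by linarith
  have hP : 0 < stmt10Pa k r := stmt10Pa_pos k (by omega) hr0.le
  have hQ : 0 < stmt10Pa (k-1) r := stmt10Pa_pos (k-1) (by omega) hr0.le
  rw [stmt10G, ← stmt10geom, ← stmt10geom]
  rw [div_eq_div_iff (by positivity) (by positivity)]
  generalize r - 1 = a
  ring

lemma stmt10G_mono (k : ℕ) (hk : 2 ≤ k) : StrictMonoOn (stmt10G k) (Set.Ici 1) := by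
  obtain ⟨m, rfl⟩ : ∃ m, k = m + 2 := ⟨k - 2, by omega⟩
  apply strictMonoOn_of_deriv_pos (convex_Ici 1) (stmt10G_contOn (m+2) hk)
  intro x hx
  rw [interior_Ici] at hx
  obtain ⟨v, hv, hd⟩ := stmt10deriv m hx
  have heq : Set.EqOn (stmt10G (m+2))
      (fun x : ℝ => ((x-1)*(x^(m+2)-1)^(m+2)) / (x*(x^(m+1)-1)^(m+3))) (Set.Ioi 1) := by
    intro y hy
    have := stmt10G_eq_ND (m+2) hk (Set.mem_Ioi.mp hy)
    simpa using this
  have hev : stmt10G (m+2) =ᶠ[nhds x]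
      (fun x : ℝ => ((x-1)*(x^(m+2)-1)^(m+2)) / (x*(x^(m+1)-1)^(m+3))) :=
    Filter.eventuallyEq_of_mem (Ioi_mem_nhds hx) heq
  rw [hev.deriv_eq, hd.deriv]
  exact hv

lemma stmt10G_growth (k : ℕ) (hk : 2 ≤ k) {r : ℝ} (hr : 1 ≤ r) :
    r / ((k:ℝ)-1)^(k+1) ≤ stmt10G k r := by
  have hr0 : (0:ℝ) < r := lt_of_lt_of_le one_pos hr
  have hk1 : (0:ℝ) < (k:ℝ) - 1 := by
    have : (2:ℝ) ≤ (k:ℝ) := by exact_mod_cast hk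
    linarith
  have hQ : 0 < stmt10Pa (k-1) r := stmt10Pa_pos (k-1) (by omega) hr0.le
  have hPge : r ^ (k-1) ≤ stmt10Pa k r := by
    rw [stmt10Pa]
    exact Finset.single_le_sum (f := fun i => r ^ i)
      (fun i _ => pow_nonneg hr0.le i) (Finset.mem_range.mpr (by omega))
  have hQle : stmt10Pa (k-1) r ≤ ((k:ℝ)-1) * r ^ (k-2) := by
    rw [stmt10Pa]
    calc ∑ i ∈ Finset.range (k-1), r ^ i ≤ ∑ _i ∈ Finset.range (k-1), r ^ (k-2) := by
          apply Finset.sum_le_sum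
          intro i hi
          exact pow_le_pow_right₀ hr (by simp at hi; omega)
      _ = ((k-1:ℕ):ℝ) * r ^ (k-2) := by rw [Finset.sum_const, nsmul_eq_mul, Finset.card_range]
      _ = ((k:ℝ)-1) * r ^ (k-2) := by rw [Nat.cast_sub (by omega), Nat.cast_one]
  obtain ⟨m, hm⟩ : ∃ m, k = m + 2 := ⟨k - 2, by omega⟩
  subst hm
  have h12 : m + 2 - 1 = m + 1 := rfl
  have h22 : m + 2 - 2 = m := rfl
  rw [h12] at hPge
  rw [h12, h22] at hQle
  rw [stmt10G, h12, div_le_div_iff₀ (by positivity) (by positivity)]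
  calc r * (r * stmt10Pa (m+1) r ^ (m+3))
      ≤ r * (r * ((((m+2:ℕ):ℝ)-1) * r ^ m) ^ (m+3)) := by
        apply mul_le_mul_of_nonneg_left _ hr0.le
        apply mul_le_mul_of_nonneg_left _ hr0.le
        exact pow_le_pow_left₀ hQ.le hQle (m+3)
    _ = (((m+2:ℕ):ℝ)-1)^(m+3) * (r^2 * (r^m)^(m+3)) := by
        rw [mul_pow]; ring
    _ = (((m+2:ℕ):ℝ)-1)^(m+3) * (r ^ (m+1))^(m+2) := by
        congr 1
        rw [← pow_mul, ← pow_mul, ← pow_add]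
        congr 1
        ring
    _ ≤ (((m+2:ℕ):ℝ)-1)^(m+3) * stmt10Pa (m+2) r ^ (m+2) := by
        apply mul_le_mul_of_nonneg_left _ (by positivity)
        exact pow_le_pow_left₀ (by positivity) hPge (m+2)
    _ = stmt10Pa (m+2) r ^ (m+2) * (((m+2:ℕ):ℝ)-1)^(m+3) := by ring

lemma stmt10exu (k : ℕ) (hk : 2 ≤ k) {L : ℝ} (hL : stmt10G k 1 < L) :
    ∃! r : ℝ, 1 < r ∧ stmt10G k r = L := by
  have hk1 : (0:ℝ) < ((k:ℝ)-1)^(k+1) := by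
    have h2 : (2:ℝ) ≤ (k:ℝ) := by exact_mod_cast hk
    have : (0:ℝ) < (k:ℝ) - 1 := by linarith
    positivity
  set R := max 1 (L * ((k:ℝ)-1)^(k+1)) with hR
  have hR1 : (1:ℝ) ≤ R := le_max_left _ _
  have hGR : L ≤ stmt10G k R := by
    refine le_trans ?_ (stmt10G_growth k hk hR1)
    rw [le_div_iff₀ hk1]
    exact le_max_right _ _
  obtain ⟨r, hrmem, hrval⟩ := intermediate_value_Icc hR1
    ((stmt10G_contOn k hk).mono (Set.Icc_subset_Ici_self)) ⟨hL.le, hGR⟩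
  have hr1 : 1 < r := by
    rcases eq_or_lt_of_le hrmem.1 with h | h
    · exfalso; rw [← h] at hrval; exact absurd hrval (ne_of_lt hL)
    · exact h
  refine ⟨r, ⟨hr1, hrval⟩, ?_⟩
  rintro r' ⟨hr'1, hr'val⟩
  exact (stmt10G_mono k hk).injOn (Set.mem_Ici.mpr hr'1.le) (Set.mem_Ici.mpr hr1.le)
    (hr'val.trans hrval.symm)

lemma stmt10diagmono (k : ℕ) {x y : ℝ} (hx : 0 ≤ x) (hxy : x < y) :
    x * (1+x)^k < y * (1+y)^k := by
  have h1 : (1+x)^k ≤ (1+y)^k := pow_le_pow_left₀ (by linarith) (by linarith) k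
  have h2 : (0:ℝ) < (1+y)^k := pow_pos (by linarith) k
  calc x * (1+x)^k ≤ x * (1+y)^k := mul_le_mul_of_nonneg_left h1 hx
    _ < y * (1+y)^k := mul_lt_mul_of_pos_right hxy h2

lemma stmt10diag (k : ℕ) {Λ : ℝ} (hΛ : 0 < Λ) :
    ∃! x : ℝ, 0 < x ∧ x * (1+x)^k = Λ := by
  have hcont : Continuous (fun x : ℝ => x * (1+x)^k) := by continuity
  obtain ⟨x, hxmem, hxval⟩ := intermediate_value_Icc hΛ.le hcont.continuousOn
    (by
      constructor
      · show (0:ℝ) * (1+0)^k ≤ Λ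
        simp; linarith
      · show Λ ≤ Λ * (1+Λ)^k
        exact le_mul_of_one_le_right hΛ.le (one_le_pow₀ (by linarith)))
  simp only at hxval
  have hx0 : 0 < x := by
    rcases eq_or_lt_of_le hxmem.1 with h | h
    · exfalso; rw [← h] at hxval; simp at hxval; linarith
    · exact h
  refine ⟨x, ⟨hx0, hxval⟩, ?_⟩
  rintro y ⟨hy0, hyval⟩
  rcases lt_trichotomy y x with h | h | h
  · have := stmt10diagmono k hy0.le h; rw [hxval, hyval] at this; linarith
  · exact h
  · have := stmt10diagmono k hx0.le h; rw [hxval, hyval] at this; linarith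

lemma stmt10rk (k : ℕ) (hk : 2 ≤ k) {r : ℝ} (hr : 1 < r) : r < r ^ k := by
  calc r = r ^ 1 := (pow_one r).symm
    _ < r ^ k := pow_lt_pow_right₀ hr (by omega)

lemma stmt10build (k : ℕ) (hk : 2 ≤ k) {r : ℝ} (hr : 1 < r) :
    0 < (r-1)/(r^k-r) ∧ (r-1)/(r^k-r) < r^k*((r-1)/(r^k-r)) ∧
    ((r-1)/(r^k-r)) * (1 + r^k*((r-1)/(r^k-r)))^k = stmt10G k r ∧
    (r^k*((r-1)/(r^k-r))) * (1 + (r-1)/(r^k-r))^k = stmt10G k r := by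
  have hr0 : (0:ℝ) < r := lt_trans one_pos hr
  have hkr : (0:ℝ) < r^k - r := sub_pos.mpr (stmt10rk k hk hr)
  have hA : (0:ℝ) < (r-1)/(r^k-r) := div_pos (by linarith) hkr
  have hrk1 : (1:ℝ) < r^k := one_lt_pow₀ hr (by omega)
  have hBA : (r-1)/(r^k-r) < r^k*((r-1)/(r^k-r)) := by
    nth_rewrite 1 [← one_mul ((r-1)/(r^k-r))]
    exact mul_lt_mul_of_pos_right hrk1 hA
  have hval : (r^k*((r-1)/(r^k-r))) * (1 + (r-1)/(r^k-r))^k = stmt10G k r := by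
    rw [← mul_div_assoc]
    exact stmt10val k hk hr
  refine ⟨hA, hBA, ?_, hval⟩
  have h1B : 1 + r^k*((r-1)/(r^k-r)) = r*(1 + (r-1)/(r^k-r)) := by
    field_simp
    ring
  rw [h1B, mul_pow, ← hval]
  ring

lemma stmt10extract (k : ℕ) (hk : 2 ≤ k) {A B : ℝ} (hA : 0 < A) (hB : 0 < B) (hAB : A < B)
    (heq : A*(1+B)^k = B*(1+A)^k) :
    ∃ r, 1 < r ∧ A = (r-1)/(r^k-r) ∧ B = r^k*A ∧ B*(1+A)^k = stmt10G k r := by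
  have hA1 : (0:ℝ) < 1 + A := by linarith
  have hB1 : (0:ℝ) < 1 + B := by linarith
  set r := (1+B)/(1+A) with hrdef
  have hr1 : 1 < r := (one_lt_div hA1).mpr (by linarith)
  have hr0 : (0:ℝ) < r := lt_trans one_pos hr1
  have hrB : 1 + B = r * (1+A) := by
    rw [hrdef, div_mul_cancel₀ _ (ne_of_gt hA1)]
  have hBrA : B = r^k * A := by
    rw [hrB, mul_pow] at heq
    have h' : A * r^k * (1+A)^k = B * (1+A)^k := by
      calc A * r^k * (1+A)^k = A * (r^k * (1+A)^k) := by ring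
        _ = B * (1+A)^k := heq
    have h := mul_right_cancel₀ (pow_ne_zero k (ne_of_gt hA1)) h'
    rw [← h]; ring
  have hkr : (0:ℝ) < r^k - r := sub_pos.mpr (stmt10rk k hk hr1)
  have hAeq : A = (r-1)/(r^k-r) := by
    have hlin : A * (r^k - r) = r - 1 := by
      have h2 : 1 + r^k * A = r * (1 + A) := by rw [← hBrA, hrB]
      linear_combination h2
    rw [eq_div_iff (ne_of_gt hkr)]
    exact hlin
  refine ⟨r, hr1, hAeq, hBrA, ?_⟩
  rw [hBrA, hAeq, ← mul_div_assoc]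
  exact stmt10val k hk hr1

/-- Analytic core of Theorem 2: the system `A(1+B)^k = Λ`, `B(1+A)^k = Λ` in
positive reals has exactly one (diagonal) solution for `Λ ≤ Λ_cr`, and exactly
three solutions (one diagonal, two swapped off-diagonal ones) for `Λ > Λ_cr`. -/
theorem stmt_10 (k : ℕ) (hk : 2 ≤ k) (Λ : ℝ) (hΛ : 0 < Λ)
    (Λcr : ℝ) (hΛcr : Λcr = (k : ℝ) ^ k / ((k : ℝ) - 1) ^ (k + 1))
    (S : Set (ℝ × ℝ))
    (hS : S = {p : ℝ × ℝ | 0 < p.1 ∧ 0 < p.2 ∧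
      p.1 * (1 + p.2) ^ k = Λ ∧ p.2 * (1 + p.1) ^ k = Λ}) :
    (Λ ≤ Λcr → (∃! p : ℝ × ℝ, p ∈ S) ∧ ∀ p ∈ S, p.1 = p.2) ∧
    (Λcr < Λ → ∃ A₀ A B : ℝ, A ≠ B ∧
      S = {(A₀, A₀), (A, B), (B, A)}) := by
  subst hΛcr hS
  obtain ⟨A₀, ⟨hA₀pos, hA₀eq⟩, hA₀uniq⟩ := stmt10diag k hΛ
  have hG1 : stmt10G k 1 = (k:ℝ)^k / ((k:ℝ)-1)^(k+1) := stmt10G_one k hk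
  have hclass : ∀ A B : ℝ, 0 < A → 0 < B → A < B → A*(1+B)^k = Λ → B*(1+A)^k = Λ →
      ∃ r, 1 < r ∧ stmt10G k r = Λ ∧ A = (r-1)/(r^k-r) ∧ B = r^k*A := by
    intro A B hA hB hAB h1 h2
    obtain ⟨r, hr1, hAeq, hBeq, hGr⟩ := stmt10extract k hk hA hB hAB (h1.trans h2.symm)
    exact ⟨r, hr1, by rw [← hGr, h2], hAeq, hBeq⟩
  have hgt : ∀ A B : ℝ, 0 < A → 0 < B → A < B → A*(1+B)^k = Λ → B*(1+A)^k = Λ →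
      (k:ℝ)^k / ((k:ℝ)-1)^(k+1) < Λ := by
    intro A B hA hB hAB h1 h2
    obtain ⟨r, hr1, hGr, _, _⟩ := hclass A B hA hB hAB h1 h2
    rw [← hG1, ← hGr]
    exact stmt10G_mono k hk (Set.mem_Ici.mpr le_rfl) (Set.mem_Ici.mpr hr1.le) hr1
  constructor
  · intro hle
    have hdiageq : ∀ p : ℝ × ℝ, p ∈ {p : ℝ × ℝ | 0 < p.1 ∧ 0 < p.2 ∧
        p.1 * (1 + p.2) ^ k = Λ ∧ p.2 * (1 + p.1) ^ k = Λ} → p.1 = p.2 := by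
      rintro ⟨A, B⟩ hp
      obtain ⟨hA, hB, h1, h2⟩ := hp
      by_contra hne
      rcases lt_or_gt_of_ne hne with h | h
      · exact absurd (hgt A B hA hB h h1 h2) (not_lt.mpr hle)
      · exact absurd (hgt B A hB hA h h2 h1) (not_lt.mpr hle)
    refine ⟨⟨(A₀, A₀), ⟨hA₀pos, hA₀pos, hA₀eq, hA₀eq⟩, ?_⟩, hdiageq⟩
    rintro ⟨x, y⟩ hq
    have hxy : x = y := hdiageq (x, y) hq
    obtain ⟨hx, _, h1, _⟩ := hq
    have : x = A₀ := hA₀uniq x ⟨hx, by rw [hxy] at h1 ⊢; exact h1⟩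
    exact Prod.ext this (hxy ▸ this)
  · intro hlt
    obtain ⟨r, ⟨hr1, hGr⟩, hruniq⟩ := stmt10exu k hk (by rw [hG1]; exact hlt)
    obtain ⟨hApos, hABlt, hAval, hBval⟩ := stmt10build k hk hr1
    set A : ℝ := (r-1)/(r^k-r) with hAdef
    set B : ℝ := r^k*((r-1)/(r^k-r)) with hBdef
    have hBpos : 0 < B := lt_trans hApos hABlt
    refine ⟨A₀, A, B, ne_of_lt hABlt, ?_⟩
    ext ⟨x, y⟩
    simp only [Set.mem_setOf_eq, Set.mem_insert_iff, Set.mem_singleton_iff, Prod.mk.injEq]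
    constructor
    · rintro ⟨hx, hy, h1, h2⟩
      rcases lt_trichotomy x y with h | h | h
      · right; left
        obtain ⟨r', hr'1, hG', hx', hy'⟩ := hclass x y hx hy h h1 h2
        have hrr : r' = r := hruniq r' ⟨hr'1, hG'⟩
        subst hrr
        exact ⟨hx', by rw [hy', hx']⟩
      · left
        have hxA : x = A₀ := hA₀uniq x ⟨hx, by rw [h] at h1 ⊢; exact h1⟩
        exact ⟨hxA, h ▸ hxA⟩
      · right; right
        obtain ⟨r', hr'1, hG', hy', hx'⟩ := hclass y x hy hx h h2 h1
        have hrr : r' = r := hruniq r' ⟨hr'1, hG'⟩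
        subst hrr
        exact ⟨by rw [hx', hy'], hy'⟩
    · rintro (⟨hx, hy⟩ | ⟨hx, hy⟩ | ⟨hx, hy⟩) <;> subst hx <;> subst hy
      · exact ⟨hA₀pos, hA₀pos, hA₀eq, hA₀eq⟩
      · exact ⟨hApos, hBpos, by rw [hAval, hGr], by rw [hBval, hGr]⟩
      · exact ⟨hBpos, hApos, by rw [hBval, hGr], by rw [hAval, hGr]⟩
end

section
/- Let f : [0,1] → [0,1] be a continuous function with a fixed point ξ ∈ (0,1). Assume f is differentiable at ξ and f'(ξ) < −1. Then there exist points x_0 and x_1 with 0 ≤ x_0 < ξ < x_1 ≤ 1 such that f(x_0) = x_1 and f(x_1) = x_0. -/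
open Set Filter Topology

/-- Lemma (cited from [K]): a continuous self-map of `[0,1]` with a fixed point
`ξ ∈ (0,1)` at which it is differentiable with derivative `< -1` has a 2-cycle
`x₀ < ξ < x₁`. -/
theorem stmt_11 (f : ℝ → ℝ)
    (hmaps : Set.MapsTo f (Set.Icc 0 1) (Set.Icc 0 1))
    (hcont : ContinuousOn f (Set.Icc 0 1))
    (ξ : ℝ) (hξ : ξ ∈ Set.Ioo (0 : ℝ) 1) (hfix : f ξ = ξ)
    (f' : ℝ) (hderiv : HasDerivWithinAt f f' (Set.Icc 0 1) ξ)
    (hf' : f' < -1) :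
    ∃ x₀ x₁ : ℝ, 0 ≤ x₀ ∧ x₀ < ξ ∧ ξ < x₁ ∧ x₁ ≤ 1 ∧
      f x₀ = x₁ ∧ f x₁ = x₀ := by
  obtain ⟨hξ0, hξ1⟩ := hξ
  set ε : ℝ := (-1 - f') / 2 with hε
  have hεpos : 0 < ε := by rw [hε]; linarith
  have hfe : f' + ε < -1 := by rw [hε]; linarith
  -- slope estimate
  have hslope := hasDerivWithinAt_iff_tendsto_slope.mp hderiv
  have hev : ∀ᶠ x in 𝓝[Set.Icc 0 1 \ {ξ}] ξ, |slope f ξ x - f'| < ε := by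
    have := Metric.tendsto_nhds.mp hslope ε hεpos
    simpa [Real.dist_eq] using this
  obtain ⟨δ, hδpos, hδ⟩ := Metric.mem_nhdsWithin_iff.mp hev
  have key : ∀ x ∈ Set.Icc (0:ℝ) 1, x ≠ ξ → |x - ξ| < δ →
      f x - ξ = slope f ξ x * (x - ξ) ∧ |slope f ξ x - f'| < ε := by
    intro x hx hne hlt
    constructor
    · have : x - ξ ≠ 0 := sub_ne_zero.mpr hne
      rw [slope_def_field, hfix]
      field_simp
    · exact hδ ⟨Metric.mem_ball.mpr (by rwa [Real.dist_eq]), hx, hne⟩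
  -- Estimate A: left side
  have estA : ∀ x ∈ Set.Icc (0:ℝ) 1, x < ξ → ξ - x < δ →
      ξ - x < f x - ξ ∧ f x - ξ ≤ (ε - f') * (ξ - x) := by
    intro x hx hlt hclose
    obtain ⟨heq, habs⟩ := key x hx (ne_of_lt hlt) (by rw [abs_sub_lt_iff]; constructor <;> linarith)
    rw [abs_sub_lt_iff] at habs
    set s := slope f ξ x
    constructor
    · nlinarith [habs.1, habs.2]
    · nlinarith [habs.1, habs.2]
  -- Estimate C: right side
  have estC : ∀ y ∈ Set.Icc (0:ℝ) 1, ξ < y → y - ξ < δ → f y - ξ < -(y - ξ) := by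
    intro y hy hlt hclose
    obtain ⟨heq, habs⟩ := key y hy (ne_of_gt hlt) (by rw [abs_sub_lt_iff]; constructor <;> linarith)
    rw [abs_sub_lt_iff] at habs
    nlinarith [habs.1, habs.2]
  -- choose a
  set K : ℝ := ε - f' with hK
  have hK1 : 1 < K := by rw [hK]; linarith
  set η : ℝ := min δ ξ / (2 * K) with hη
  have hminpos : 0 < min δ ξ := lt_min hδpos hξ0
  have hηpos : 0 < η := by positivity
  have hηδ : η < δ := by
    have h1 : η ≤ δ / (2 * K) := by
      apply div_le_div_of_nonneg_right (min_le_left _ _) (by linarith)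
    have : δ / (2 * K) < δ := by
      rw [div_lt_iff₀ (by linarith)]; nlinarith
    linarith
  have hηξ : η < ξ := by
    have h1 : η ≤ ξ / (2 * K) := by
      apply div_le_div_of_nonneg_right (min_le_right _ _) (by linarith)
    have : ξ / (2 * K) < ξ := by
      rw [div_lt_iff₀ (by linarith)]; nlinarith
    linarith
  have hKη : K * η < δ := by
    have hKne : (K:ℝ) ≠ 0 := by linarith
    have heq : K * η = min δ ξ / 2 := by rw [hη]; field_simp
    rw [heq]; have := min_le_left δ ξ; linarith
  set a : ℝ := ξ - η with ha
  have ha0 : 0 < a := by rw [ha]; linarith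
  have haξ : a < ξ := by rw [ha]; linarith
  have haI : a ∈ Set.Icc (0:ℝ) 1 := ⟨le_of_lt ha0, by linarith⟩
  have hfa := estA a haI haξ (by rw [ha]; simpa using hηδ)
  have hξa : ξ - a = η := by rw [ha]; ring
  rw [hξa] at hfa
  have hfaI : f a ∈ Set.Icc (0:ℝ) 1 := hmaps haI
  have hfagt : ξ < f a := by linarith [hfa.1]
  have hfaδ : f a - ξ < δ := by
    have := hfa.2
    nlinarith
  have hffa : f (f a) < a := by
    have := estC (f a) hfaI hfagt hfaδ
    have h1 := hfa.1
    rw [ha]; linarith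
  -- the set S
  set S : Set ℝ := (Set.Icc 0 a ∩ (fun x => f (f x) - x) ⁻¹' Set.Ici 0) ∪
      (Set.Icc 0 a ∩ f ⁻¹' Set.Iic ξ) with hS
  have hsub : Set.Icc (0:ℝ) a ⊆ Set.Icc (0:ℝ) 1 := Set.Icc_subset_Icc le_rfl (by linarith)
  have hcont2 : ContinuousOn (fun x => f (f x)) (Set.Icc (0:ℝ) 1) := hcont.comp hcont hmaps
  have hSclosed : IsClosed S := by
    apply IsClosed.union
    · exact ((hcont2.mono hsub).sub continuousOn_id).preimage_isClosed_of_isClosed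
        isClosed_Icc isClosed_Ici
    · exact (hcont.mono hsub).preimage_isClosed_of_isClosed isClosed_Icc isClosed_Iic
  have hmem_iff : ∀ x, x ∈ S ↔ x ∈ Set.Icc 0 a ∧ (x ≤ f (f x) ∨ f x ≤ ξ) := by
    intro x
    rw [hS]
    simp only [Set.mem_union, Set.mem_inter_iff, Set.mem_preimage, Set.mem_Ici, Set.mem_Iic]
    constructor
    · rintro (⟨h1, h2⟩ | ⟨h1, h2⟩)
      · exact ⟨h1, Or.inl (by linarith)⟩
      · exact ⟨h1, Or.inr h2⟩
    · rintro ⟨h1, h2 | h2⟩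
      · exact Or.inl ⟨h1, by simp; linarith⟩
      · exact Or.inr ⟨h1, h2⟩
  have h0S : (0:ℝ) ∈ S := by
    rw [hmem_iff]
    refine ⟨⟨le_rfl, le_of_lt ha0⟩, Or.inl ?_⟩
    exact (hmaps (hmaps ⟨le_rfl, zero_le_one⟩)).1
  have hSne : S.Nonempty := ⟨0, h0S⟩
  have hSbdd : BddAbove S := ⟨a, fun x hx => ((hmem_iff x).mp hx).1.2⟩
  set x₀ : ℝ := sSup S with hx₀
  have hx₀S : x₀ ∈ S := hSclosed.csSup_mem hSne hSbdd
  have hx₀mem := (hmem_iff x₀).mp hx₀S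
  have hx₀0 : 0 ≤ x₀ := le_csSup hSbdd h0S
  have hx₀a : x₀ ≤ a := hx₀mem.1.2
  have haS : a ∉ S := by
    rw [hmem_iff]
    rintro ⟨-, h | h⟩
    · linarith
    · linarith
  have hx₀lta : x₀ < a := lt_of_le_of_ne hx₀a (fun h => haS (h ▸ hx₀S))
  have hright : ∀ x ∈ Set.Ioc x₀ a, f (f x) < x ∧ ξ < f x := by
    intro x ⟨hx1, hx2⟩
    have hxS : x ∉ S := fun h => absurd (le_csSup hSbdd h) (not_le.mpr hx1)
    rw [hmem_iff] at hxS
    push_neg at hxS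
    have hxI : x ∈ Set.Icc 0 a := ⟨by linarith, hx2⟩
    obtain ⟨h1, h2⟩ := hxS hxI
    exact ⟨h1, h2⟩
  have hx₀I : x₀ ∈ Set.Icc (0:ℝ) 1 := hsub ⟨hx₀0, hx₀a⟩
  have hIocsub : Set.Ioc x₀ a ⊆ Set.Icc (0:ℝ) 1 := fun x ⟨h1, h2⟩ => ⟨by linarith, by linarith⟩
  have hne : (𝓝[Set.Ioc x₀ a] x₀).NeBot := by
    rw [nhdsWithin_Ioc_eq_nhdsGT hx₀lta]
    infer_instance
  -- Claim 1 : ξ ≤ f x₀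
  have hclaim1 : ξ ≤ f x₀ := by
    have htend : Tendsto f (𝓝[Set.Ioc x₀ a] x₀) (𝓝 (f x₀)) :=
      (hcont x₀ hx₀I).mono hIocsub
    exact ge_of_tendsto htend (eventually_of_mem self_mem_nhdsWithin
      fun x hx => (hright x hx).2.le)
  -- Claim 2 : f (f x₀) ≤ x₀
  have hclaim2 : f (f x₀) ≤ x₀ := by
    have htend : Tendsto (fun x => f (f x) - x) (𝓝[Set.Ioc x₀ a] x₀)
        (𝓝 (f (f x₀) - x₀)) := (((hcont2 x₀ hx₀I).mono hIocsub).sub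
          (continuousWithinAt_id)).tendsto
    have : f (f x₀) - x₀ ≤ 0 := le_of_tendsto htend (eventually_of_mem self_mem_nhdsWithin
      fun x hx => by have := (hright x hx).1; simp; linarith)
    linarith
  -- conclude
  have hfx₀gt : ξ < f x₀ := by
    rcases lt_or_eq_of_le hclaim1 with h | h
    · exact h
    · exfalso
      have : f (f x₀) = ξ := by rw [← h, hfix, h]
      have : f (f x₀) > x₀ := by rw [this]; linarith
      linarith
  have hfix2 : f (f x₀) = x₀ := by
    rcases hx₀mem.2 with h | h
    · linarith
    · linarith
  refine ⟨x₀, f x₀, hx₀0, by linarith, hfx₀gt, (hmaps hx₀I).2, rfl, hfix2⟩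
end

section
/- Let Λ > 4 be a real number and set A = (Λ − 2 + √(Λ(Λ−4)))/2 and B = (Λ − 2 − √(Λ(Λ−4)))/2. Then A > 0, B > 0, A ≠ B, A(1+B)^2 = Λ, and B(1+A)^2 = Λ. -/
/-- Formula (19) of the paper for `k = 2`: for `Λ > 4` the two off-diagonal
positive solutions of `A(1+B)^2 = Λ = B(1+A)^2` are given explicitly. -/
theorem stmt_13 (Λ : ℝ) (hΛ : 4 < Λ)
    (A B : ℝ)
    (hA : A = (Λ - 2 + Real.sqrt (Λ * (Λ - 4))) / 2)
    (hB : B = (Λ - 2 - Real.sqrt (Λ * (Λ - 4))) / 2) :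
    0 < A ∧ 0 < B ∧ A ≠ B ∧ A * (1 + B) ^ 2 = Λ ∧ B * (1 + A) ^ 2 = Λ := by
  set s := Real.sqrt (Λ * (Λ - 4)) with hs
  have hnn : 0 ≤ Λ * (Λ - 4) := by nlinarith
  have hs2 : s ^ 2 = Λ * (Λ - 4) := Real.sq_sqrt hnn
  have hspos : 0 < s := Real.sqrt_pos.mpr (by nlinarith)
  have hsl : s < Λ - 2 := by
    nlinarith [Real.sq_sqrt hnn, Real.sqrt_nonneg (Λ * (Λ - 4))]
  refine ⟨by rw [hA]; nlinarith, by rw [hB]; nlinarith, ?_, by rw [hA, hB]; nlinarith, by rw [hA, hB]; nlinarith⟩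
  rw [hA, hB]; intro h; nlinarith
end

section
/- Let λ, z, z̃ : ℤ\{0} → ℝ with λ_i z_i > 0 and λ_i z̃_i > 0 for all i, and suppose S = Σ_{l≠0} λ_l z_l and S̃ = Σ_{l≠0} λ_l z̃_l both converge. Define x_0 = (1+S)/(1+S+S̃) and x_j = λ_j z̃_j/(1+S+S̃) for j ≠ 0. Then x_0 = (1−x_0)/(1+S̃) + x_0·(1 − S̃/((1+S)(1+S̃))) and x_j = (1−x_0)·λ_j z̃_j/(1+S̃) + x_0·λ_j z̃_j/((1+S)(1+S̃)) for every j ≠ 0, the family (x_j)_{j∈ℤ} is summable, and Σ_{j∈ℤ} x_j = 1. -/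
/-- Stationary distribution of the Markov chain associated with each periodic
Gibbs measure `μ₁, μ₂`: the explicitly given vector solves `X·P = X` and is
stochastic. -/
theorem stmt_14 (lam z zt : ℤ → ℝ)
    (hpos : ∀ i : ℤ, i ≠ 0 → 0 < lam i * z i)
    (hpos' : ∀ i : ℤ, i ≠ 0 → 0 < lam i * zt i)
    (hS : Summable fun l : {i : ℤ // i ≠ 0} => lam l * z l)
    (hSt : Summable fun l : {i : ℤ // i ≠ 0} => lam l * zt l)
    (S St : ℝ)
    (hSdef : S = ∑' l : {i : ℤ // i ≠ 0}, lam l * z l)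
    (hStdef : St = ∑' l : {i : ℤ // i ≠ 0}, lam l * zt l)
    (x : ℤ → ℝ)
    (hx0 : x 0 = (1 + S) / (1 + S + St))
    (hxj : ∀ j : ℤ, j ≠ 0 → x j = lam j * zt j / (1 + S + St)) :
    x 0 = (1 - x 0) / (1 + St) + x 0 * (1 - St / ((1 + S) * (1 + St))) ∧
    (∀ j : ℤ, j ≠ 0 →
      x j = (1 - x 0) * (lam j * zt j) / (1 + St) +
        x 0 * (lam j * zt j) / ((1 + S) * (1 + St))) ∧
    Summable x ∧ ∑' j : ℤ, x j = 1 := by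
  have hSnn : 0 ≤ S := by
    rw [hSdef]; exact tsum_nonneg fun l => le_of_lt (hpos l l.2)
  have hStnn : 0 ≤ St := by
    rw [hStdef]; exact tsum_nonneg fun l => le_of_lt (hpos' l l.2)
  have h1S : (1 : ℝ) + S ≠ 0 := by positivity
  have h1St : (1 : ℝ) + St ≠ 0 := by positivity
  have hc : (1 : ℝ) + S + St ≠ 0 := by positivity
  have hsum : Summable x := by
    rw [← (Set.finite_singleton (0 : ℤ)).summable_compl_iff]
    have : Summable fun l : {i : ℤ // i ≠ 0} => lam l * zt l / (1 + S + St) :=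
      hSt.div_const _
    refine this.congr fun l => ?_
    have hl : (l : ℤ) ≠ 0 := by
      have := l.2
      simpa [Set.mem_compl_iff, Set.mem_singleton_iff] using this
    exact (hxj l hl).symm
  refine ⟨?_, ?_, hsum, ?_⟩
  · rw [hx0]; field_simp; ring
  · intro j hj
    rw [hxj j hj, hx0]; field_simp; ring
  · have hite : ∑' n : ℤ, (if n = 0 then 0 else x n) = St / (1 + S + St) := by
      have hsupp : Function.support (fun n : ℤ => if n = 0 then 0 else x n)
          ⊆ {i : ℤ | i ≠ 0} := by
        intro n hn
        simp only [Function.mem_support] at hn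
        intro h0
        exact hn (by simp [h0])
      rw [← tsum_subtype_eq_of_support_subset hsupp]
      have : ∀ l : {i : ℤ | i ≠ 0},
          (if (l : ℤ) = 0 then 0 else x l) = lam l * zt l / (1 + S + St) := by
        intro l
        rw [if_neg l.2, hxj l l.2]
      rw [tsum_congr this, tsum_div_const]
      exact congrArg (· / (1 + S + St)) hStdef.symm
    have := Summable.tsum_eq_add_tsum_ite hsum 0
    rw [this, hite, hx0]
    field_simp
end

section
/- Let k ≥ 2 be an integer, Λ > 0, and f(x) = Λ/(1+x)^k. Every positive fixed point of f is a fixed point of h = f ∘ f; conversely, if A > 0 and B > 0 satisfy A = f(B) and B = f(A) with A ≠ B, then A and B are fixed points of h that are not fixed points of f, and f'(A_0) < −1 at the unique positive fixed point A_0 of f, where f'(A_0) = −k·A_0/(1+A_0). -/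
noncomputable def sig (s : ℝ) (m : ℕ) : ℝ := ((s^2)^m - 1)/(s^2 - 1)

lemma sq_pos_of_one_lt (s : ℝ) (hs : 1 < s) : (0:ℝ) < s^2 - 1 := by nlinarith

lemma sig_succ (s : ℝ) (hs : 1 < s) (m : ℕ) : sig s (m+1) = sig s m + (s^2)^m := by
  have h := sq_pos_of_one_lt s hs
  unfold sig
  field_simp
  ring

lemma sig_one (s : ℝ) (hs : 1 < s) : sig s 1 = 1 := by
  have h := sq_pos_of_one_lt s hs
  unfold sig
  field_simp

lemma bern (s : ℝ) (hs : 1 < s) (n : ℕ) : (1:ℝ) + (n:ℝ) * (s-1) ≤ s^n := by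
  have hb := one_add_mul_le_pow (a := s - 1) (by linarith) n
  have h1 : (1:ℝ) + (s-1) = s := by ring
  rwa [h1] at hb

lemma sig_ge (s : ℝ) (hs : 1 < s) : ∀ m : ℕ, ((m:ℝ)+1) * s^m ≤ sig s (m+1) := by
  intro m
  induction m with
  | zero => simp [sig_one s hs]
  | succ n ih =>
    have hs0 : (0:ℝ) < s := by linarith
    have hb' := bern s hs (n+2)
    push_cast at hb'
    rw [sig_succ s hs]
    have hsp : (0:ℝ) < s^n := pow_pos hs0 n
    have key : ((n:ℝ)+1+1) * s^(n+1) ≤ ((n:ℝ)+1) * s^n + (s^2)^(n+1) := by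
      have h2 : (s^2)^(n+1) = s^(n+2) * s^n := by ring
      have h3 : s^(n+1) = s^n * s := by ring
      rw [h2, h3]
      nlinarith [mul_le_mul_of_nonneg_right hb' hsp.le]
    push_cast
    linarith [ih, key]

lemma sig_pos (s : ℝ) (hs : 1 < s) (m : ℕ) : 0 < sig s (m+1) := by
  have := sig_ge s hs m
  have hs0 : (0:ℝ) < s := by linarith
  have : (0:ℝ) < ((m:ℝ)+1) * s^m := by positivity
  linarith [sig_ge s hs m]

lemma sig_gt (s : ℝ) (hs : 1 < s) (m : ℕ) : ((m:ℝ)+2) * s^(m+1) < sig s (m+2) := by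
  have hs0 : (0:ℝ) < s := by linarith
  have ih := sig_ge s hs m
  rw [sig_succ s hs]
  have hb' := bern s hs (m+1)
  push_cast at hb'
  -- s^(m+2) ≥ s*(1+(m+1)(s-1)), so (m+1)s^m + s^(2m+2) - (m+2)s^(m+1) ≥ s^m (m+1)(s-1)^2 > 0
  have key : ((m:ℝ)+2) * s^(m+1) < ((m:ℝ)+1) * s^m + (s^2)^(m+1) := by
    have h2 : (s^2)^(m+1) = (s^(m+1) * s) * s^m := by ring
    have h3 : s^(m+1) = s^m * s := by ring
    have hsp : (0:ℝ) < s^m := pow_pos hs0 m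
    nlinarith [mul_le_mul_of_nonneg_right (mul_le_mul_of_nonneg_right hb' hs0.le) hsp.le,
      mul_pos (mul_pos hsp (by nlinarith : (0:ℝ) < (s-1)^2)) (by positivity : (0:ℝ) < (m:ℝ)+1)]
  linarith [ih, key]

lemma sig_id (s : ℝ) (hs : 1 < s) (m : ℕ) :
    sig s (m+1) * sig s (m+3) = sig s (m+2)^2 - (s^2)^(m+1) := by
  have h := sq_pos_of_one_lt s hs
  unfold sig
  field_simp
  ring

lemma sig_logconv (s : ℝ) (hs : 1 < s) (m : ℕ) :
    ((m:ℝ)+1) * ((m:ℝ)+3) * sig s (m+2)^2 ≤ ((m:ℝ)+2)^2 * (sig s (m+1) * sig s (m+3)) := by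
  have hid := sig_id s hs m
  have hge := sig_ge s hs (m+1)
  push_cast at hge
  have hs0 : (0:ℝ) < s := by linarith
  have hsq : ((m:ℝ)+2)^2 * (s^2)^(m+1) ≤ sig s (m+2)^2 := by
    have h1 : (0:ℝ) ≤ ((m:ℝ)+1+1) * s^(m+1) := by positivity
    have h2 := mul_le_mul hge hge h1 (le_of_lt (sig_pos s hs (m+1)))
    calc ((m:ℝ)+2)^2 * (s^2)^(m+1) = (((m:ℝ)+1+1) * s^(m+1)) * (((m:ℝ)+1+1) * s^(m+1)) := by ring
    _ ≤ sig s (m+2) * sig s (m+2) := h2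
    _ = sig s (m+2)^2 := by ring
  nlinarith [hid, hsq]

lemma sig_L4 (s : ℝ) (hs : 1 < s) : ∀ j : ℕ,
    ((j:ℝ)+2)^j * sig s (j+1)^(j+1) ≤ ((j:ℝ)+1)^(j+1) * sig s (j+2)^j := by
  intro j
  induction j with
  | zero => simp [sig_one s hs]
  | succ j ih =>
    have hlc := sig_logconv s hs j
    have hp1 := sig_pos s hs j
    have hp2 := sig_pos s hs (j+1)
    have hp3 := sig_pos s hs (j+2)
    have hlcp := pow_le_pow_left₀ (by positivity) hlc (j+1)
    rw [mul_pow, mul_pow, mul_pow, mul_pow, ← pow_mul, ← pow_mul] at hlcp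
    have hcomb := mul_le_mul ih hlcp (by positivity) (by positivity)
    have hC : (0:ℝ) < ((j:ℝ)+1)^(j+1) * sig s (j+1)^(j+1) * (((j:ℝ)+2)^j * sig s (j+2)^j) := by
      positivity
    have key : (((j:ℝ)+1)^(j+1) * sig s (j+1)^(j+1) * (((j:ℝ)+2)^j * sig s (j+2)^j)) *
          (((j:ℝ)+3)^(j+1) * sig s (j+2) ^ (j+2))
        ≤ (((j:ℝ)+1)^(j+1) * sig s (j+1)^(j+1) * (((j:ℝ)+2)^j * sig s (j+2)^j)) *
          (((j:ℝ)+2)^(j+2) * sig s (j+3) ^ (j+1)) := by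
      calc (((j:ℝ)+1)^(j+1) * sig s (j+1)^(j+1) * (((j:ℝ)+2)^j * sig s (j+2)^j)) *
          (((j:ℝ)+3)^(j+1) * sig s (j+2) ^ (j+2))
          = (((j:ℝ)+2)^j * sig s (j+1)^(j+1)) *
            (((j:ℝ)+1)^(j+1) * ((j:ℝ)+3)^(j+1) * sig s (j+2) ^ (2*(j+1))) := by ring
        _ ≤ (((j:ℝ)+1)^(j+1) * sig s (j+2)^j) *
            (((j:ℝ)+2)^(2*(j+1)) * (sig s (j+1)^(j+1) * sig s (j+3)^(j+1))) := hcomb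
        _ = (((j:ℝ)+1)^(j+1) * sig s (j+1)^(j+1) * (((j:ℝ)+2)^j * sig s (j+2)^j)) *
          (((j:ℝ)+2)^(j+2) * sig s (j+3) ^ (j+1)) := by ring
    have hres := le_of_mul_le_mul_left key hC
    push_cast
    have e1 : j+1+1 = j+2 := rfl
    have e2 : j+1+2 = j+3 := rfl
    rw [e1, e2]
    convert hres using 2 <;> first | rfl | ring

lemma sig_core (s : ℝ) (hs : 1 < s) (m : ℕ) :
    ((m:ℝ)+2)^(m+2) * s^2 * sig s (m+1)^(m+3) < ((m:ℝ)+1)^(m+3) * sig s (m+2)^(m+2) := by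
  have hs0 : (0:ℝ) < s := by linarith
  have hp1 := sig_pos s hs m
  have hp2 := sig_pos s hs (m+1)
  have h1 : ((m:ℝ)+2)^2 * (s^2)^(m+1) < sig s (m+2)^2 := by
    have hgt := sig_gt s hs m
    have h0 : (0:ℝ) ≤ ((m:ℝ)+2) * s^(m+1) := by positivity
    calc ((m:ℝ)+2)^2 * (s^2)^(m+1)
        = (((m:ℝ)+2) * s^(m+1)) * (((m:ℝ)+2) * s^(m+1)) := by ring
      _ < sig s (m+2) * sig s (m+2) := mul_lt_mul'' hgt hgt h0 h0
      _ = sig s (m+2)^2 := by ring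
  have h2 := pow_le_pow_left₀ (by positivity) (sig_L4 s hs m) (m+3)
  rw [mul_pow, mul_pow, ← pow_mul, ← pow_mul, ← pow_mul, ← pow_mul] at h2
  apply lt_of_pow_lt_pow_left₀ (m+1) (by positivity)
  have hX1 : (0:ℝ) ≤ ((m:ℝ)+2)^2 * (s^2)^(m+1) := by positivity
  have hY2 : (0:ℝ) < ((m:ℝ)+1)^((m+1)*(m+3)) * sig s (m+2)^(m*(m+3)) := by positivity
  calc (((m:ℝ)+2)^(m+2) * s^2 * sig s (m+1)^(m+3))^(m+1)
      = (((m:ℝ)+2)^2 * (s^2)^(m+1)) * (((m:ℝ)+2)^(m*(m+3)) * sig s (m+1)^((m+1)*(m+3))) := by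
        rw [mul_pow, mul_pow, ← pow_mul, ← pow_mul, ← pow_mul]; ring
    _ ≤ (((m:ℝ)+2)^2 * (s^2)^(m+1)) * (((m:ℝ)+1)^((m+1)*(m+3)) * sig s (m+2)^(m*(m+3))) := by
        apply mul_le_mul_of_nonneg_left h2 hX1
    _ < sig s (m+2)^2 * (((m:ℝ)+1)^((m+1)*(m+3)) * sig s (m+2)^(m*(m+3))) := by
        apply mul_lt_mul_of_pos_right h1 hY2
    _ = (((m:ℝ)+1)^(m+3) * sig s (m+2)^(m+2))^(m+1) := by
        rw [mul_pow, ← pow_mul, ← pow_mul]; ring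

lemma core (m : ℕ) (t : ℝ) (ht : 1 < t) :
    ((m:ℝ)+2)^(m+2) * t * (t^(m+1) - 1)^(m+3) < ((m:ℝ)+1)^(m+3) * (t-1) * (t^(m+2) - 1)^(m+2) := by
  have ht0 : (0:ℝ) < t := by linarith
  set s := Real.sqrt t with hsdef
  have hst : s^2 = t := Real.sq_sqrt ht0.le
  have hs : 1 < s := by
    nlinarith [Real.sqrt_nonneg t, hst]
  have h := sig_core s hs m
  have ht1 : (0:ℝ) < t - 1 := by linarith
  have e1 : t^(m+1) - 1 = sig s (m+1) * (t-1) := by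
    unfold sig; rw [hst]; field_simp
  have e2 : t^(m+2) - 1 = sig s (m+2) * (t-1) := by
    unfold sig; rw [hst]; field_simp
  rw [hst] at h
  rw [e1, e2]
  calc ((m:ℝ)+2)^(m+2) * t * (sig s (m+1) * (t-1))^(m+3)
      = (((m:ℝ)+2)^(m+2) * t * sig s (m+1)^(m+3)) * (t-1)^(m+3) := by
        rw [mul_pow]; ring
    _ < (((m:ℝ)+1)^(m+3) * sig s (m+2)^(m+2)) * (t-1)^(m+3) := by
        apply mul_lt_mul_of_pos_right h (by positivity)
    _ = ((m:ℝ)+1)^(m+3) * (t-1) * (sig s (m+2) * (t-1))^(m+2) := by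
        rw [mul_pow]; ring

lemma key (m : ℕ) (Λ A B A₀ : ℝ) (hA : 0 < A) (hB : 0 < B) (hBA : B < A)
    (h1 : Λ = A * (1+B)^(m+2)) (h2 : Λ = B * (1+A)^(m+2))
    (h0 : 0 < A₀) (hfix : Λ = A₀ * (1+A₀)^(m+2)) :
    1 + A₀ < ((m:ℝ)+2) * A₀ := by
  have hb0 : (0:ℝ) < 1 + B := by linarith
  have ha0 : (0:ℝ) < 1 + A := by linarith
  set b : ℝ := 1 + B with hbdef
  set t : ℝ := (1 + A)/b with htdef
  have ht : 1 < t := (one_lt_div hb0).2 (by linarith)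
  have ht0 : (0:ℝ) < t := by linarith
  have htb : t * b = 1 + A := div_mul_cancel₀ _ (ne_of_gt hb0)
  -- cycle equation
  have key1 : t * b - 1 = (b - 1) * t^(m+2) := by
    have hAeq : A = t * b - 1 := by rw [htb]; ring
    have hBeq : B = b - 1 := by rw [hbdef]; ring
    have e : (t*b - 1) * b^(m+2) = ((b-1) * t^(m+2)) * b^(m+2) := by
      calc (t*b - 1) * b^(m+2) = A * (1+B)^(m+2) := by rw [← hAeq, hbdef]
        _ = B * (1+A)^(m+2) := by rw [← h1, h2]
        _ = (b-1) * (t*b)^(m+2) := by rw [← hBeq, htb]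
        _ = ((b-1) * t^(m+2)) * b^(m+2) := by rw [mul_pow]; ring
    exact mul_right_cancel₀ (by positivity) e
  set D : ℝ := t^(m+1) - 1 with hDdef
  have hD : 0 < D := by
    have : (1:ℝ) < t^(m+1) := one_lt_pow₀ ht (by omega)
    simp [hDdef]; linarith
  have hX : (0:ℝ) < t^(m+2) - 1 := by
    have : (1:ℝ) < t^(m+2) := one_lt_pow₀ ht (by omega)
    linarith
  have key2 : b * (t * D) = t^(m+2) - 1 := by
    have hpow : t^(m+2) = t * t^(m+1) := by ring
    simp only [hDdef]
    nlinarith [key1, hpow]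
  have keyA : (t*b - 1)*(t*D) = t*(t^(m+2)-1) - t*D := by linear_combination t * key2
  have hΛval : Λ * (t * D^(m+3)) = (t-1) * (t^(m+2) - 1)^(m+2) := by
    have hAeq : A = t * b - 1 := by rw [htb]; ring
    have hcancel : Λ * (t * D^(m+3)) * t^(m+2) = ((t-1) * (t^(m+2) - 1)^(m+2)) * t^(m+2) := by
      rw [h1, hAeq]
      calc (t * b - 1) * b^(m+2) * (t * D^(m+3)) * t^(m+2)
          = ((t*b - 1)*(t*D)) * (b*(t*D))^(m+2) := by rw [mul_pow, mul_pow]; ring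
        _ = (t*(t^(m+2)-1) - t*D) * (t^(m+2)-1)^(m+2) := by rw [keyA, key2]
        _ = ((t-1) * (t^(m+2) - 1)^(m+2)) * t^(m+2) := by rw [hDdef]; ring
    exact mul_right_cancel₀ (by positivity) hcancel
  -- core inequality gives Λ * (m+1)^(m+3) > (m+2)^(m+2)
  have hcore := core m t ht
  have hΛbig : ((m:ℝ)+2)^(m+2) < ((m:ℝ)+1)^(m+3) * Λ := by
    have hpos : (0:ℝ) < t * D^(m+3) := by positivity
    apply lt_of_mul_lt_mul_right _ hpos.le
    calc ((m:ℝ)+2)^(m+2) * (t * D^(m+3)) = ((m:ℝ)+2)^(m+2) * t * (t^(m+1)-1)^(m+3) := by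
          rw [hDdef]; ring
      _ < ((m:ℝ)+1)^(m+3) * (t-1) * (t^(m+2) - 1)^(m+2) := hcore
      _ = ((m:ℝ)+1)^(m+3) * Λ * (t * D^(m+3)) := by linear_combination ((m:ℝ)+1)^(m+3) * hΛval.symm
  -- conclude
  by_contra hcon
  push_neg at hcon
  have hm1 : ((m:ℝ)+1) * A₀ ≤ 1 := by nlinarith
  have hm2 : ((m:ℝ)+1) * (1 + A₀) ≤ (m:ℝ)+2 := by nlinarith
  have hsmall : ((m:ℝ)+1)^(m+3) * Λ ≤ ((m:ℝ)+2)^(m+2) := by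
    rw [hfix]
    have e : ((m:ℝ)+1)^(m+3) * (A₀ * (1+A₀)^(m+2))
        = (((m:ℝ)+1) * A₀) * (((m:ℝ)+1) * (1+A₀))^(m+2) := by
      rw [mul_pow]; ring
    rw [e]
    calc (((m:ℝ)+1) * A₀) * (((m:ℝ)+1) * (1+A₀))^(m+2)
        ≤ 1 * ((m:ℝ)+2)^(m+2) := by
          apply mul_le_mul hm1 (pow_le_pow_left₀ (by positivity) hm2 _) (by positivity) (by norm_num)
      _ = ((m:ℝ)+2)^(m+2) := by ring
  linarith

/-- Relations between `f(x) = Λ/(1+x)^k` and `h = f ∘ f`: positive fixed points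
of `f` are fixed points of `h`; an off-diagonal 2-cycle gives fixed points of
`h` that are not fixed points of `f`, and forces `f'(A₀) = -kA₀/(1+A₀) < -1`
at the unique positive fixed point `A₀` of `f`. -/
theorem stmt_16 (k : ℕ) (hk : 2 ≤ k) (Λ : ℝ) (hΛ : 0 < Λ)
    (f : ℝ → ℝ) (hf : f = fun x => Λ / (1 + x) ^ k) :
    (∀ A : ℝ, 0 < A → f A = A → f (f A) = A) ∧
    (∀ A B : ℝ, 0 < A → 0 < B → A = f B → B = f A → A ≠ B →
      f (f A) = A ∧ f (f B) = B ∧ f A ≠ A ∧ f B ≠ B ∧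
      ∀ A₀ : ℝ, 0 < A₀ → f A₀ = A₀ →
        HasDerivAt f (-(k : ℝ) * A₀ / (1 + A₀)) A₀ ∧
        -(k : ℝ) * A₀ / (1 + A₀) < -1) := by
  obtain ⟨m, rfl⟩ : ∃ m, k = m + 2 := ⟨k - 2, by omega⟩
  constructor
  · intro A hA hfix
    rw [hfix, hfix]
  · intro A B hA hB hAB hBA hne
    have hfB : f B = A := hAB.symm
    have hfA : f A = B := hBA.symm
    refine ⟨by rw [hfA, hfB], by rw [hfB, hfA], by rw [hfA]; exact fun h => hne h.symm,
      by rw [hfB]; exact hne, ?_⟩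
    intro A₀ h0 hfix
    have ha : (0:ℝ) < 1 + A := by linarith
    have hb : (0:ℝ) < 1 + B := by linarith
    have h0' : (0:ℝ) < 1 + A₀ := by linarith
    have hΛ1 : Λ = A * (1+B)^(m+2) := by
      have : Λ / (1+B)^(m+2) = A := by rw [← hfB, hf]
      field_simp at this
      linarith [this]
    have hΛ2 : Λ = B * (1+A)^(m+2) := by
      have : Λ / (1+A)^(m+2) = B := by rw [← hfA, hf]
      field_simp at this
      linarith [this]
    have hΛ0 : Λ = A₀ * (1+A₀)^(m+2) := by
      have : Λ / (1+A₀)^(m+2) = A₀ := by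
        rw [hf] at hfix
        exact hfix
      field_simp at this
      linarith [this]
    have hineq : 1 + A₀ < ((m:ℝ)+2) * A₀ := by
      rcases hne.lt_or_gt with h | h
      · exact key m Λ B A A₀ hB hA h hΛ2 hΛ1 h0 hΛ0
      · exact key m Λ A B A₀ hA hB h hΛ1 hΛ2 h0 hΛ0
    constructor
    · -- derivative
      have hd1 : HasDerivAt (fun x : ℝ => 1 + x) 1 A₀ := by
        simpa using (hasDerivAt_id A₀).const_add 1
      have hd2 : HasDerivAt (fun x : ℝ => (1 + x)^(m+2))
          (((m:ℝ)+2) * (1 + A₀)^(m+1) * 1) A₀ := by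
        have := hd1.pow (m+2)
        refine this.congr_deriv ?_
        push_cast
        ring_nf
      have hd3 := (hasDerivAt_const A₀ Λ).div hd2 (by positivity)
      rw [hf]
      refine hd3.congr_deriv ?_
      rw [hΛ0]
      have h2 : ((1 + A₀)^(m+2))^2 = (1+A₀)^(m+2) * (1+A₀)^(m+1) * (1+A₀) := by ring
      field_simp
      push_cast
      ring
    · -- inequality
      rw [div_lt_iff₀ h0']
      push_cast
      linarith
end

section
/- Let k ≥ 2 be an integer and let λ : ℤ\{0} → ℝ with λ_i > 0 for all i and Σ_{j≠0} λ_j = Λ < ∞ with 0 < Λ ≤ k^k/(k−1)^{k+1}. If z, z̃ : ℤ\{0} → ℝ are summable with z_i > 0, z̃_i > 0 for all i, and satisfy z_i = λ_i/(1 + Σ_{j≠0} z̃_j)^k and z̃_i = λ_i/(1 + Σ_{j≠0} z_j)^k for every i ≠ 0, then z = z̃. -/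
/-- AM-GM via Bernoulli: `n^n * a^(n-1) * b ≤ ((n-1)a + b)^n`. -/
lemma bernoulli_amgm (n : ℕ) (hn : 1 ≤ n) {a b : ℝ} (ha : 0 < a) (hb : 0 ≤ b) :
    (n:ℝ)^n * (a^(n-1) * b) ≤ (((n:ℝ) - 1) * a + b)^n := by
  have hn0 : (0:ℝ) < n := by exact_mod_cast hn
  have hn1 : (1:ℝ) ≤ n := by exact_mod_cast hn
  have hba : 0 ≤ b / a := div_nonneg hb ha.le
  have hH : (-2:ℝ) ≤ (b/a - 1)/n := by
    rw [le_div_iff₀ hn0]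
    nlinarith
  have hber := one_add_mul_le_pow hH n
  have e1 : 1 + (n:ℝ) * ((b/a - 1)/n) = b/a := by field_simp; ring
  have e2 : 1 + (b/a - 1)/(n:ℝ) = (((n:ℝ) - 1) * a + b)/((n:ℝ)*a) := by
    field_simp
    ring
  rw [e1, e2] at hber
  rw [div_pow, le_div_iff₀ (by positivity)] at hber
  have hpow : a^n = a^(n-1) * a := by
    nth_rewrite 1 [show n = (n-1)+1 by omega]
    rw [pow_succ]
  calc (n:ℝ)^n * (a^(n-1) * b) = b/a * ((n:ℝ)*a)^n := by
        rw [mul_pow, hpow]; field_simp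
    _ ≤ (((n:ℝ) - 1) * a + b)^n := hber

/-- Power chain: from the AM-GM bound and `Λ ≤ Λ_cr` conclude `K²Λ² ≤ P^(k+1)`. -/
lemma chain_ineq (k : ℕ) (hk : 2 ≤ k) (K c Λ P : ℝ) (hK : 0 < K) (hc : 0 < c)
    (hL : 0 < Λ) (hP : 0 < P)
    (A1 : K^k * Λ ≤ P^k * c^(k-1)) (A2 : Λ * c^(k+1) ≤ K^k) :
    K^2 * Λ^2 ≤ P^(k+1) := by
  obtain ⟨m, rfl⟩ : ∃ m, k = m + 2 := ⟨k - 2, by omega⟩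
  have h1 : (m+2-1) = m+1 := rfl
  rw [h1] at A1
  apply le_of_pow_le_pow_left₀ (show m+2 ≠ 0 by omega) (by positivity)
  have c1 : (K^(m+2)*Λ)^(m+3) ≤ (P^(m+2)*c^(m+1))^(m+3) :=
    pow_le_pow_left₀ (by positivity) A1 _
  have c2 : (Λ*c^(m+3))^(m+1) ≤ (K^(m+2))^(m+1) :=
    pow_le_pow_left₀ (by positivity) A2 _
  have step : (K^2*Λ^2)^(m+2) * c^((m+1)*(m+3)) ≤ (P^(m+3))^(m+2) * c^((m+1)*(m+3)) := by
    calc (K^2*Λ^2)^(m+2) * c^((m+1)*(m+3))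
        = K^(2*m+4) * Λ^(m+3) * (Λ*c^(m+3))^(m+1) := by ring
      _ ≤ K^(2*m+4) * Λ^(m+3) * (K^(m+2))^(m+1) := by
          apply mul_le_mul_of_nonneg_left c2 (by positivity)
      _ = (K^(m+2)*Λ)^(m+3) := by ring
      _ ≤ (P^(m+2)*c^(m+1))^(m+3) := c1
      _ = (P^(m+3))^(m+2) * c^((m+1)*(m+3)) := by ring
  have := le_of_mul_le_mul_right step (by positivity : (0:ℝ) < c^((m+1)*(m+3)))
  convert this using 2

/-- No genuine two-cycle below the critical value. -/
lemma no_two_cycle (k : ℕ) (hk : 2 ≤ k) (Λ : ℝ) (hΛpos : 0 < Λ)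
    (hcr : Λ ≤ (k : ℝ) ^ k / ((k : ℝ) - 1) ^ (k + 1)) {S T : ℝ}
    (hT : 0 < T) (hS : 0 < S)
    (h1 : S = Λ / (1+T)^k) (h2 : T = Λ / (1+S)^k) (hlt : T < S) : False := by
  set K : ℝ := (k : ℝ) with hKdef
  set c : ℝ := K - 1 with hcdef
  have hK2 : (2:ℝ) ≤ K := by rw [hKdef]; exact_mod_cast hk
  have hK : 0 < K := by linarith
  have hc : 0 < c := by rw [hcdef]; linarith
  set f : ℝ → ℝ := fun x => Λ / (1+x)^k with hfdef
  have hfpos : ∀ x : ℝ, 0 < x → 0 < f x := by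
    intro x hx
    exact div_pos hΛpos (pow_pos (by linarith) k)
  -- derivative of f
  have hfd : ∀ x : ℝ, 0 < x → HasDerivAt f (-(K*Λ) / (1+x)^(k+1)) x := by
    intro x hx
    have hx1 : (0:ℝ) < 1 + x := by linarith
    have h1' : HasDerivAt (fun y : ℝ => 1 + y) 1 x := (hasDerivAt_id x).const_add 1
    have h2' : HasDerivAt (fun y : ℝ => (1+y)^k) ((k:ℝ) * (1+x)^(k-1) * 1) x := h1'.pow k
    have h3' : HasDerivAt (fun y : ℝ => ((1+y)^k)⁻¹)
        (-((k:ℝ)*(1+x)^(k-1)*1) / ((1+x)^k)^2) x := h2'.inv (by positivity)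
    have h4' := h3'.const_mul Λ
    have hfeq : f = fun y : ℝ => Λ * ((1+y)^k)⁻¹ := by
      funext y; simp only [hfdef]; rw [div_eq_mul_inv]
    rw [hfeq]
    refine h4'.congr_deriv ?_
    symm
    have hpow : ((1+x)^k)^2 = (1+x)^(k-1) * (1+x)^(k+1) := by
      rw [← pow_mul, ← pow_add]
      congr 1
      omega
    rw [hpow]
    field_simp
    ring
  -- key inequality: the two-step derivative product is at most 1
  have hkey : ∀ x : ℝ, 0 < x →
      K*Λ/(1 + f x)^(k+1) * (K*Λ/(1+x)^(k+1)) ≤ 1 := by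
    intro x hx
    have hx1 : (0:ℝ) < 1 + x := by linarith
    have hfx := hfpos x hx
    set u : ℝ := 1 + x with hudef
    set w : ℝ := 1 + f x with hwdef
    have hu : 0 < u := hx1
    have hw : 0 < w := by rw [hwdef]; linarith
    have hu0 : u ≠ 0 := hu.ne'
    have hpowu : u^k = u^(k-1) * u := by
      nth_rewrite 1 [show k = (k-1)+1 by omega]
      rw [pow_succ]
    -- u * w = u + Λ / u^(k-1)
    have huw : u * w = u + Λ / u^(k-1) := by
      have : w = 1 + Λ / u^k := by rw [hwdef, hfdef]
      rw [this, mul_add, mul_one]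
      congr 1
      rw [hpowu]
      field_simp
    -- AM-GM
    have hb := bernoulli_amgm k (by omega) (a := u/c) (b := Λ/u^(k-1))
      (div_pos hu hc) (by positivity)
    rw [← hcdef, ← hKdef] at hb
    have e3 : (u/c)^(k-1) * (Λ/u^(k-1)) = Λ / c^(k-1) := by
      rw [div_pow]
      field_simp
    have e4 : c * (u/c) + Λ/u^(k-1) = u * w := by
      rw [mul_div_cancel₀ _ hc.ne', huw]
    rw [e3, e4] at hb
    -- hb : K^k * (Λ / c^(k-1)) ≤ (u*w)^k
    have A1 : K^k * Λ ≤ (u*w)^k * c^(k-1) := by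
      rw [← mul_div_assoc] at hb
      exact (div_le_iff₀ (pow_pos hc _)).mp hb
    have A2 : Λ * c^(k+1) ≤ K^k := (le_div_iff₀ (pow_pos hc _)).mp hcr
    have hchain := chain_ineq k hk K c Λ (u*w) hK hc hΛpos (by positivity) A1 A2
    have heq : K*Λ/w^(k+1) * (K*Λ/u^(k+1)) = (K^2*Λ^2)/((u*w)^(k+1)) := by
      rw [div_mul_div_comm, mul_pow]
      ring
    rw [heq]
    exact (div_le_one (by positivity)).mpr hchain
  -- g = f ∘ f - id
  set g : ℝ → ℝ := fun x => f (f x) - x with hgdef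
  have hgd : ∀ x : ℝ, 0 < x → HasDerivAt g
      ((-(K*Λ)/(1 + f x)^(k+1)) * (-(K*Λ)/(1+x)^(k+1)) - 1) x := by
    intro x hx
    have hcomp := (hfd (f x) (hfpos x hx)).comp x (hfd x hx)
    exact hcomp.sub (hasDerivAt_id x)
  have hderiv_nonpos : ∀ x ∈ interior (Set.Icc T S), deriv g x ≤ 0 := by
    intro x hxmem
    rw [interior_Icc] at hxmem
    have hx : 0 < x := lt_trans hT hxmem.1
    rw [(hgd x hx).deriv]
    have h := hkey x hx
    have e : (-(K*Λ)/(1 + f x)^(k+1)) * (-(K*Λ)/(1+x)^(k+1))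
        = K*Λ/(1 + f x)^(k+1) * (K*Λ/(1+x)^(k+1)) := by ring
    rw [e]
    linarith
  have hcont : ContinuousOn g (Set.Icc T S) := by
    intro x hx
    exact ((hgd x (lt_of_lt_of_le hT hx.1)).continuousAt).continuousWithinAt
  have hdiff : DifferentiableOn ℝ g (interior (Set.Icc T S)) := by
    intro x hx
    rw [interior_Icc] at hx
    exact ((hgd x (lt_trans hT hx.1)).differentiableAt).differentiableWithinAt
  have hanti := antitoneOn_of_deriv_nonpos (convex_Icc T S) hcont hdiff hderiv_nonpos
  have hfT : f T = S := by rw [hfdef]; exact h1.symm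
  have hfS : f S = T := by rw [hfdef]; exact h2.symm
  have hgT : g T = 0 := by rw [hgdef]; simp only [hfT, hfS, sub_self]
  have hgS : g S = 0 := by rw [hgdef]; simp only [hfS, hfT, sub_self]
  have hTmem : T ∈ Set.Icc T S := ⟨le_refl T, hlt.le⟩
  have hSmem : S ∈ Set.Icc T S := ⟨hlt.le, le_refl S⟩
  have hg0 : ∀ x ∈ Set.Icc T S, g x = 0 := by
    intro x hx
    have u1 : g x ≤ g T := hanti hTmem hx hx.1
    have u2 : g S ≤ g x := hanti hx hSmem hx.2
    rw [hgT] at u1; rw [hgS] at u2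
    linarith
  -- polynomial argument
  set p : Polynomial ℝ :=
    Polynomial.X * ((1 + Polynomial.X)^k + Polynomial.C Λ)^k
      - Polynomial.C Λ * (1 + Polynomial.X)^(k*k) with hpdef
  have hpeval : ∀ x : ℝ, p.eval x = x * ((1+x)^k + Λ)^k - Λ * (1+x)^(k*k) := by
    intro x
    rw [hpdef]
    simp
  have hproots : ∀ x ∈ Set.Icc T S, p.IsRoot x := by
    intro x hx
    have hxpos : 0 < x := lt_of_lt_of_le hT hx.1
    have hx1 : (0:ℝ) < 1 + x := by linarith
    have hfix : f (f x) = x := by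
      have h6 := hg0 x hx
      simp only [hgdef] at h6
      linarith
    have hfxval : f x = Λ / (1+x)^k := by rw [hfdef]
    have e : (1 + f x) = ((1+x)^k + Λ)/(1+x)^k := by
      rw [hfxval, add_div, div_self (ne_of_gt (pow_pos hx1 k))]
    have hden : (0:ℝ) < (1+x)^k + Λ := by positivity
    have hfix2 : Λ * (1+x)^(k*k) / ((1+x)^k + Λ)^k = x := by
      have h5 : f (f x) = Λ / (1 + f x)^k := by simp only [hfdef]
      rw [h5, e, div_pow, div_div_eq_mul_div, ← pow_mul] at hfix
      exact hfix
    have hfix3 : Λ * (1+x)^(k*k) = x * ((1+x)^k + Λ)^k :=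
      (div_eq_iff (ne_of_gt (pow_pos hden k))).mp hfix2
    unfold Polynomial.IsRoot
    rw [hpeval]
    linarith
  have hpne : p ≠ 0 := by
    intro h
    have hev : p.eval (-1) = 0 := by rw [h]; simp
    rw [hpeval] at hev
    have h11 : (1:ℝ) + (-1) = 0 := by ring
    rw [h11, zero_pow (show k ≠ 0 by omega), zero_pow (show k*k ≠ 0 by positivity)] at hev
    have : (0:ℝ) < Λ^k := pow_pos hΛpos k
    simp at hev
    nlinarith [hev, this]
  have hfin := Polynomial.finite_setOf_isRoot hpne
  exact (Set.Icc_infinite hlt) (hfin.subset hproots)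

/-- Uniqueness part of Theorem 2: for `0 < Λ ≤ Λ_cr(k)`, every positive
two-periodic solution of the boundary-law system is translation invariant. -/
theorem stmt_18 (k : ℕ) (hk : 2 ≤ k)
    (lam : {i : ℤ // i ≠ 0} → ℝ) (hlam : ∀ i, 0 < lam i)
    (hsum : Summable lam) (Λ : ℝ) (hΛ : Λ = ∑' j, lam j)
    (hΛpos : 0 < Λ)
    (hcr : Λ ≤ (k : ℝ) ^ k / ((k : ℝ) - 1) ^ (k + 1))
    (z zt : {i : ℤ // i ≠ 0} → ℝ)
    (hzsum : Summable z) (hztsum : Summable zt)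
    (hz : ∀ i, 0 < z i) (hzt : ∀ i, 0 < zt i)
    (heqz : ∀ i, z i = lam i / (1 + ∑' j, zt j) ^ k)
    (heqzt : ∀ i, zt i = lam i / (1 + ∑' j, z j) ^ k) :
    z = zt := by
  have i0 : {i : ℤ // i ≠ 0} := ⟨1, one_ne_zero⟩
  have hS : 0 < ∑' j, z j := Summable.tsum_pos hzsum (fun i => (hz i).le) i0 (hz i0)
  have hT : 0 < ∑' j, zt j := Summable.tsum_pos hztsum (fun i => (hzt i).le) i0 (hzt i0)
  have hSeq : (∑' j, z j) = Λ / (1 + ∑' j, zt j)^k := by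
    rw [hΛ]
    calc (∑' j, z j) = ∑' i, lam i / (1 + ∑' j, zt j)^k := tsum_congr heqz
      _ = (∑' j, lam j) / (1 + ∑' j, zt j)^k := tsum_div_const
  have hTeq : (∑' j, zt j) = Λ / (1 + ∑' j, z j)^k := by
    rw [hΛ]
    calc (∑' j, zt j) = ∑' i, lam i / (1 + ∑' j, z j)^k := tsum_congr heqzt
      _ = (∑' j, lam j) / (1 + ∑' j, z j)^k := tsum_div_const
  have hST : (∑' j, z j) = (∑' j, zt j) := by
    rcases lt_trichotomy (∑' j, zt j) (∑' j, z j) with h | h | h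
    · exact (no_two_cycle k hk Λ hΛpos hcr hT hS hSeq hTeq h).elim
    · exact h.symm
    · exact (no_two_cycle k hk Λ hΛpos hcr hS hT hTeq hSeq h).elim
  funext i
  rw [heqz i, heqzt i, hST]
end

section
/- Let k ≥ 2 be an integer, A > 0 with A ≠ 1/(k−1), and let z : ℤ\{0} → ℝ be summable with z_i > 0 for all i and Σ_{j≠0} z_j = A. Let B > 0, B ≠ A, satisfy A(1+B)^k = B(1+A)^k, and define λ_i = z_i(1+B)^k and z̃_i = λ_i/(1+A)^k for i ≠ 0. Then z̃ is summable with Σ_{j≠0} z̃_j = B, and the pairs (z, z̃) and (z̃, z) both satisfy the system z_i = λ_i/(1 + Σ_{j≠0} z̃_j)^k, z̃_i = λ_i/(1 + Σ_{j≠0} z_j)^k for all i ≠ 0. -/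
/-- Constructive content of the Proposition in Section 4: from a positive
summable `z` with sum `A ≠ 1/(k-1)` and a companion root `B ≠ A` of
`A(1+B)^k = B(1+A)^k`, the sequences `λ_i = z_i(1+B)^k`, `z̃_i = λ_i/(1+A)^k`
give two-periodic solutions `(z, z̃)` and `(z̃, z)` of the boundary-law
system. -/
theorem stmt_19 (k : ℕ) (hk : 2 ≤ k)
    (A : ℝ) (hApos : 0 < A) (hAne : A ≠ 1 / ((k : ℝ) - 1))
    (z : {i : ℤ // i ≠ 0} → ℝ) (hz : ∀ i, 0 < z i)
    (hzsum : Summable z) (hA : ∑' j, z j = A)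
    (B : ℝ) (hBpos : 0 < B) (hBA : B ≠ A)
    (hroot : A * (1 + B) ^ k = B * (1 + A) ^ k)
    (lam zt : {i : ℤ // i ≠ 0} → ℝ)
    (hlam : ∀ i, lam i = z i * (1 + B) ^ k)
    (hzt : ∀ i, zt i = lam i / (1 + A) ^ k) :
    Summable zt ∧ ∑' j, zt j = B ∧
    (∀ i, z i = lam i / (1 + ∑' j, zt j) ^ k) ∧
    (∀ i, zt i = lam i / (1 + ∑' j, z j) ^ k) := by
  have hAk : (1 + A) ^ k ≠ 0 := by positivity
  have hBk : (1 + B) ^ k ≠ 0 := by positivity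
  have hztf : zt = fun i => z i * ((1 + B) ^ k / (1 + A) ^ k) := by
    funext i; rw [hzt i, hlam i]; ring
  have hsum : Summable zt := by rw [hztf]; exact hzsum.mul_right _
  have htsum : ∑' j, zt j = B := by
    rw [hztf, tsum_mul_right, hA]
    field_simp
    linarith [hroot]
  refine ⟨hsum, htsum, ?_, ?_⟩
  · intro i
    rw [htsum, hlam i]
    field_simp
  · intro i
    rw [hA, hzt i]
end
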